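/- arXiv:1309.0533 — 2 statements merged into one kernel-verified Lean document; each statement's English description precedes it below -/
import Mathlib

section
/- Let A be a bounded normal operator on a complex Hilbert space H and let L ⊆ H be a finite-dimensional subspace. Then σ(S_L) ⊆ Q(σ(A)), and for every z ∉ Q(σ(A)) and every ψ ∈ H one has |⟨(A − z)ψ, (A − conj(z))ψ⟩| ≥ dist(z, Q(σ(A)))² ‖ψ‖². -/
open scoped InnerProductSpace ComplexConjugate Classical
open Complex ContinuousLinearMap

noncomputable section

variable {H : Type*} [NormedAddCommGroup H] [InnerProductSpace ℂ H] [CompleteSpace H]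

/-- Orthogonal projection onto a subspace, as a map into the subspace (junk value `0` if the
subspace admits no orthogonal projection). -/
def projCLM (L : Submodule ℂ H) : H →L[ℂ] ↥L :=
  if h : L.HasOrthogonalProjection then (letI := h; L.orthogonalProjectionOnto) else 0

/-- Compression `P B|_L : L → L` of an operator to a subspace. -/
def compress (B : H →L[ℂ] H) (L : Submodule ℂ H) : ↥L →L[ℂ] ↥L :=
  projCLM L ∘L B ∘L L.subtypeL

/-- Block operator matrix `[[B11, B12],[B21, B22]]` on `E × E`. -/
def block2 {E : Type*} [NormedAddCommGroup E] [NormedSpace ℂ E]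
    (B11 B12 B21 B22 : E →L[ℂ] E) : (E × E) →L[ℂ] (E × E) :=
  ((B11 ∘L ContinuousLinearMap.fst ℂ E E) + (B12 ∘L ContinuousLinearMap.snd ℂ E E)).prod
  ((B21 ∘L ContinuousLinearMap.fst ℂ E E) + (B22 ∘L ContinuousLinearMap.snd ℂ E E))

/-- `S_L = [[P(A + A*)|_L, −P A*A|_L],[I, 0]]` on `L × L`. -/
def SL (A : H →L[ℂ] H) (L : Submodule ℂ H) : (↥L × ↥L) →L[ℂ] (↥L × ↥L) :=
  block2 (compress (A + ContinuousLinearMap.adjoint A) L)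
    (-(compress (ContinuousLinearMap.adjoint A * A) L)) 1 0

/-- The second order spectrum of `A` relative to `L`. -/
def Spec2 (A : H →L[ℂ] H) (L : Submodule ℂ H) : Set ℂ :=
  {z | ∃ φ ∈ L, φ ≠ 0 ∧ ∀ ψ ∈ L, ⟪(A - z • 1) φ, (A - (conj z) • 1) ψ⟫_ℂ = 0}

/-- `Σ_z := {(λ − z)(conj λ − z) : λ ∈ Σ}`. -/
def sigmaSet (S : Set ℂ) (z : ℂ) : Set ℂ := (fun l => (l - z) * ((conj l) - z)) '' S

/-- `Q(Σ) := {z : 0 ∈ closed convex hull of Σ_z}`. -/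
def QSet (S : Set ℂ) : Set ℂ := {z | (0 : ℂ) ∈ closure (convexHull ℝ (sigmaSet S z))}

/-- **Geometric key lemma**: every point of the closed convex hull of `Σ_z` has modulus at least
`dist(z, Q(Σ))²`. -/
lemma lemG (S : Set ℂ) (z : ℂ) {w : ℂ} (hw : w ∈ closure (convexHull ℝ (sigmaSet S z))) :
    Metric.infDist z (QSet S) ^ 2 ≤ ‖w‖ := by
  set c := Metric.infDist z (QSet S) with hc
  have hcl : IsClosed {w : ℂ | c ^ 2 ≤ ‖w‖} :=
    isClosed_le continuous_const continuous_norm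
  refine closure_minimal ?_ hcl hw
  intro w hw
  rw [convexHull_eq] at hw
  obtain ⟨ι, t, wt, pt, hw0, hw1, hpt, hcm⟩ := hw
  choose lam hlamS hlam using hpt
  rw [Finset.centerMass_eq_of_sum_1 _ _ hw1] at hcm
  have hsum1' : ∑ i ∈ t.attach, wt i.1 = 1 := by rw [Finset.sum_attach]; exact hw1
  set s : ℂ := ∑ i ∈ t.attach, (wt i.1 : ℝ) • (lam i.1 i.2 + conj (lam i.1 i.2)) with hs
  set p : ℂ := ∑ i ∈ t.attach, (wt i.1 : ℝ) • (lam i.1 i.2 * conj (lam i.1 i.2)) with hp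
  obtain ⟨δ, hδ⟩ := IsAlgClosed.exists_pow_nat_eq (s ^ 2 - 4 * p) (n := 2) (by norm_num)
  set z1 := (s + δ) / 2 with hz1
  set z2 := (s - δ) / 2 with hz2
  have hsum1 : ∑ i ∈ t.attach, ((wt i.1 : ℝ) : ℂ) = 1 := by
    rw [← Complex.ofReal_sum, hsum1', Complex.ofReal_one]
  have key : ∀ ζ : ℂ, ∑ i ∈ t.attach, (wt i.1 : ℝ) • ((lam i.1 i.2 - ζ) * (conj (lam i.1 i.2) - ζ))
      = (ζ - z1) * (ζ - z2) := by
    intro ζ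
    have expand : ∀ i ∈ t.attach, (wt i.1 : ℝ) • ((lam i.1 i.2 - ζ) * (conj (lam i.1 i.2) - ζ))
        = (wt i.1 : ℝ) • (lam i.1 i.2 * conj (lam i.1 i.2))
          - ζ * ((wt i.1 : ℝ) • (lam i.1 i.2 + conj (lam i.1 i.2)))
          + ζ ^ 2 * ((wt i.1 : ℝ) : ℂ) := by
      intro i _
      simp only [Complex.real_smul]
      ring
    rw [Finset.sum_congr rfl expand]
    rw [Finset.sum_add_distrib, Finset.sum_sub_distrib, ← Finset.mul_sum, ← Finset.mul_sum,
      hsum1, ← hs, ← hp]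
    have h2 : (ζ - z1) * (ζ - z2) = ζ ^ 2 - s * ζ + (s ^ 2 - δ ^ 2) / 4 := by
      rw [hz1, hz2]; ring
    rw [h2, hδ]
    ring
  have hwval : w = (z - z1) * (z - z2) := by
    rw [← hcm, ← key z, ← Finset.sum_attach t (fun i => wt i • pt i)]
    refine Finset.sum_congr rfl fun i _ => ?_
    have h := hlam i.1 i.2
    simp only at h
    rw [← h]
  have hroot : ∀ ζ, ζ = z1 ∨ ζ = z2 → ζ ∈ QSet S := by
    intro ζ hζ
    have h0 : (0 : ℂ)
        = ∑ i ∈ t.attach, (wt i.1 : ℝ) • ((lam i.1 i.2 - ζ) * (conj (lam i.1 i.2) - ζ)) := by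
      rw [key ζ]
      rcases hζ with h | h <;> subst h <;> ring
    have hmem : (0 : ℂ) ∈ convexHull ℝ (sigmaSet S ζ) := by
      rw [h0, ← Finset.centerMass_eq_of_sum_1 _ _ hsum1']
      refine Finset.centerMass_mem_convexHull _ (fun i _ => hw0 i.1 i.2)
        (by rw [hsum1']; norm_num) (fun i _ => ?_)
      exact ⟨lam i.1 i.2, hlamS i.1 i.2, rfl⟩
    exact subset_closure hmem
  have h1 : c ≤ ‖z - z1‖ := by
    rw [← Complex.dist_eq]
    exact Metric.infDist_le_dist_of_mem (hroot z1 (Or.inl rfl))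
  have h2 : c ≤ ‖z - z2‖ := by
    rw [← Complex.dist_eq]
    exact Metric.infDist_le_dist_of_mem (hroot z2 (Or.inr rfl))
  have h3 : c ^ 2 ≤ ‖z - z1‖ * ‖z - z2‖ := by
    rw [pow_two]
    exact mul_le_mul h1 h2 Metric.infDist_nonneg (norm_nonneg _)
  simpa [hwval, map_mul] using h3

/-- **Numerical range lemma**: for a normal operator, the (normalized) quadratic form lies in the
closed convex hull of the spectrum. -/
lemma lemN (C : H →L[ℂ] H) (hC : IsStarNormal C) {ψ : H} (hψ : ψ ≠ 0) :
    ⟪ψ, C ψ⟫_ℂ / ((‖ψ‖ : ℂ) ^ 2) ∈ closure (convexHull ℝ (spectrum ℂ C)) := by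
  by_contra h
  obtain ⟨f, b, hb, hu⟩ := geometric_hahn_banach_closed_point
    ((convex_convexHull ℝ _).closure) isClosed_closure h
  set c : ℂ := (f 1 : ℂ) + (f Complex.I : ℂ) * Complex.I with hcdef
  have hf : ∀ w : ℂ, f w = ((starRingEnd ℂ) c * w).re := by
    intro w
    have hw : w = (w.re : ℝ) • (1 : ℂ) + (w.im : ℝ) • Complex.I := by
      simp only [Complex.real_smul, Complex.ofReal_re, Complex.ofReal_im, mul_one]
      exact (Complex.re_add_im w).symm
    conv_lhs => rw [hw]
    rw [map_add, map_smul, map_smul]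
    simp only [hcdef, map_add, map_mul, Complex.mul_re, Complex.add_re, Complex.add_im,
      Complex.conj_re, Complex.conj_im, Complex.ofReal_re, Complex.ofReal_im, Complex.I_re,
      Complex.I_im, Complex.mul_im, smul_eq_mul]
    ring
  have hspec : ∀ μ ∈ spectrum ℂ C, ((starRingEnd ℂ) c * μ).re < b := fun μ hμ => by
    rw [← hf]
    exact hb μ (subset_closure (subset_convexHull ℝ _ hμ))
  set g : ℂ → ℂ := fun μ => (Real.sqrt (b - ((starRingEnd ℂ) c * μ).re) : ℂ) with hgdef
  have hgc : Continuous g :=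
    Complex.continuous_ofReal.comp (Real.continuous_sqrt.comp
      (continuous_const.sub (Complex.continuous_re.comp (continuous_const.mul continuous_id))))
  set S := cfc g C with hSdef
  have hS_sa : star S = S := by
    rw [hSdef, ← cfc_star g C]
    exact cfc_congr fun μ _ => Complex.conj_ofReal _
  have hSS : S * S = cfc (fun μ : ℂ => ((b - ((starRingEnd ℂ) c * μ).re : ℝ) : ℂ)) C := by
    rw [hSdef, ← cfc_mul g g C hgc.continuousOn hgc.continuousOn]
    refine cfc_congr fun μ hμ => ?_
    have h0 : 0 ≤ b - ((starRingEnd ℂ) c * μ).re := le_of_lt (sub_pos.mpr (hspec μ hμ))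
    simp only [hgdef, ← Complex.ofReal_mul, Real.mul_self_sqrt h0]
  have hpos : 0 ≤ (⟪ψ, (S * S) ψ⟫_ℂ).re := by
    have h1 : (S * S) ψ = S (S ψ) := rfl
    rw [h1, ← ContinuousLinearMap.adjoint_inner_left S (S ψ) ψ, ← star_eq_adjoint, hS_sa]
    exact inner_self_nonneg (𝕜 := ℂ) (x := S ψ)
  have hdecomp : cfc (fun μ : ℂ => ((b - ((starRingEnd ℂ) c * μ).re : ℝ) : ℂ)) C
      = (b : ℂ) • 1 - (2⁻¹ : ℂ) • (((starRingEnd ℂ) c) • C + c • star C) := by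
    have e1 : (fun μ : ℂ => ((b - ((starRingEnd ℂ) c * μ).re : ℝ) : ℂ))
        = fun μ : ℂ => (b : ℂ) - 2⁻¹ * ((starRingEnd ℂ) c * μ + c * (starRingEnd ℂ) μ) := by
      funext μ
      have h2 : (starRingEnd ℂ) c * μ + c * (starRingEnd ℂ) μ
          = 2 * (( ((starRingEnd ℂ) c * μ).re : ℝ) : ℂ) := by
        have h3 := Complex.add_conj ((starRingEnd ℂ) c * μ)
        rw [map_mul, Complex.conj_conj] at h3
        rw [h3]
        push_cast
        ring
      rw [h2]
      push_cast
      ring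
    have hc1 : Continuous (fun μ : ℂ => (starRingEnd ℂ) c * μ + c * (starRingEnd ℂ) μ) :=
      (continuous_const.mul continuous_id).add (continuous_const.mul Complex.continuous_conj)
    have hstar : cfc (fun μ : ℂ => (starRingEnd ℂ) μ) C = star C :=
      cfc_star_id (a := C) (ha := hC)
    rw [e1]
    rw [cfc_sub (fun _ : ℂ => (b : ℂ))
      (fun μ : ℂ => 2⁻¹ * ((starRingEnd ℂ) c * μ + c * (starRingEnd ℂ) μ)) C
      continuous_const.continuousOn (continuous_const.mul hc1).continuousOn,
      cfc_const (b : ℂ) C hC, Algebra.algebraMap_eq_smul_one,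
      cfc_const_mul (2⁻¹ : ℂ) (fun μ : ℂ => (starRingEnd ℂ) c * μ + c * (starRingEnd ℂ) μ) C
        hc1.continuousOn,
      cfc_add C (fun μ : ℂ => (starRingEnd ℂ) c * μ) (fun μ : ℂ => c * (starRingEnd ℂ) μ)
        (continuous_const.mul continuous_id).continuousOn
        (continuous_const.mul Complex.continuous_conj).continuousOn,
      cfc_const_mul ((starRingEnd ℂ) c) (fun μ : ℂ => μ) C continuous_id.continuousOn,
      cfc_const_mul c (fun μ : ℂ => (starRingEnd ℂ) μ) C Complex.continuous_conj.continuousOn,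
      cfc_id' ℂ C hC, hstar]
  set w0 := ⟪ψ, C ψ⟫_ℂ with hw0
  have hstarC : ⟪ψ, (star C) ψ⟫_ℂ = (starRingEnd ℂ) w0 := by
    rw [star_eq_adjoint, ContinuousLinearMap.adjoint_inner_right, hw0, ← inner_conj_symm]
  have hps : ⟪ψ, ψ⟫_ℂ = ((‖ψ‖ ^ 2 : ℝ) : ℂ) := by
    rw [inner_self_eq_norm_sq_to_K]; norm_cast
  have hinner : (⟪ψ, (S * S) ψ⟫_ℂ).re = b * ‖ψ‖ ^ 2 - ((starRingEnd ℂ) c * w0).re := by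
    rw [hSS, hdecomp]
    have expand : ((b : ℂ) • 1 - (2⁻¹ : ℂ) • (((starRingEnd ℂ) c) • C + c • star C)) ψ
        = (b : ℂ) • ψ - (2⁻¹ : ℂ) • (((starRingEnd ℂ) c) • C ψ + c • (star C) ψ) := by
      simp [ContinuousLinearMap.sub_apply, ContinuousLinearMap.smul_apply,
        ContinuousLinearMap.add_apply, ContinuousLinearMap.one_apply]
    rw [expand, inner_sub_right, inner_smul_right, inner_smul_right, inner_add_right,
      inner_smul_right, inner_smul_right, hstarC, ← hw0, hps]
    have h6 : (starRingEnd ℂ) c * w0 + (c * (starRingEnd ℂ) w0)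
        = 2 * ((((starRingEnd ℂ) c * w0).re : ℝ) : ℂ) := by
      have h3 := Complex.add_conj ((starRingEnd ℂ) c * w0)
      rw [map_mul, Complex.conj_conj] at h3
      rw [h3]; push_cast; ring
    rw [h6]
    have h4 : (2⁻¹ : ℂ) * (2 * ((((starRingEnd ℂ) c * w0).re : ℝ) : ℂ))
        = ((((starRingEnd ℂ) c * w0).re : ℝ) : ℂ) := by ring
    rw [h4]
    rw [← Complex.ofReal_mul, ← Complex.ofReal_sub, Complex.ofReal_re]
  have hne : (0 : ℝ) < ‖ψ‖ ^ 2 := pow_pos (norm_pos_iff.mpr hψ) 2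
  have hub : b < ((starRingEnd ℂ) c * w0).re / ‖ψ‖ ^ 2 := by
    have h7 := hu
    rw [hf] at h7
    have heq : ((starRingEnd ℂ) c * (w0 / ((‖ψ‖ : ℂ) ^ 2))).re
        = ((starRingEnd ℂ) c * w0).re / ‖ψ‖ ^ 2 := by
      rw [← mul_div_assoc]
      have h8 : ((‖ψ‖ : ℂ) ^ 2) = ((‖ψ‖ ^ 2 : ℝ) : ℂ) := by push_cast; ring
      rw [h8, Complex.div_ofReal_re]
    rw [heq] at h7
    exact h7
  rw [hinner] at hpos
  have h9 : ((starRingEnd ℂ) c * w0).re ≤ b * ‖ψ‖ ^ 2 := by linarith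
  have h10 : b * ‖ψ‖ ^ 2 < ((starRingEnd ℂ) c * w0).re := by
    rw [lt_div_iff₀ hne] at hub
    linarith
  linarith

lemma cfc_eq2 (C : H →L[ℂ] H) (hC : IsStarNormal C) (z : ℂ) :
    cfc (fun l : ℂ => (l - z) * ((starRingEnd ℂ) l - z)) C
      = (star C - z • 1) * (C - z • 1) := by
  have h1 : cfc (fun l : ℂ => l - z) C = C - z • 1 := by
    rw [cfc_sub (fun l : ℂ => l) (fun _ : ℂ => z) C (continuous_id.continuousOn)
      (continuous_const.continuousOn), cfc_id' ℂ C hC, cfc_const z C hC,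
      Algebra.algebraMap_eq_smul_one]
  have h2 : cfc (fun l : ℂ => (starRingEnd ℂ) l - z) C = star C - z • 1 := by
    rw [cfc_sub (fun l : ℂ => (starRingEnd ℂ) l) (fun _ : ℂ => z) C
      (Complex.continuous_conj.continuousOn) (continuous_const.continuousOn),
      cfc_const z C hC, Algebra.algebraMap_eq_smul_one]
    congr 1
    exact cfc_star_id (a := C) (ha := hC)
  rw [cfc_congr (g := fun l : ℂ => ((starRingEnd ℂ) l - z) * (l - z)) (fun x _ => mul_comm _ _),
    cfc_mul (fun l : ℂ => (starRingEnd ℂ) l - z) (fun l : ℂ => l - z) C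
    ((Complex.continuous_conj.sub continuous_const).continuousOn)
    ((continuous_id.sub continuous_const).continuousOn), h1, h2]

lemma exists_eigen {E : Type*} [NormedAddCommGroup E] [NormedSpace ℂ E]
    [FiniteDimensional ℂ E] (T : E →L[ℂ] E) {z : ℂ} (hz : z ∈ spectrum ℂ T) :
    ∃ v : E, v ≠ 0 ∧ T v = z • v := by
  by_contra hcon
  push_neg at hcon
  set M : E →L[ℂ] E := algebraMap ℂ (E →L[ℂ] E) z - T with hM
  have hMapp : ∀ v, M v = z • v - T v := by
    intro v
    simp [hM, Algebra.algebraMap_eq_smul_one]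
  have hinj : Function.Injective M.toLinearMap := by
    rw [← LinearMap.ker_eq_bot, LinearMap.ker_eq_bot']
    intro v hv
    by_contra hv0
    have h := hMapp v
    rw [show M.toLinearMap v = M v from rfl] at hv
    rw [hv] at h
    exact hcon v hv0 ((sub_eq_zero.mp h.symm).symm)
  have hsurj : Function.Surjective M.toLinearMap :=
    (LinearMap.injective_iff_surjective).mp hinj
  let e : E ≃ₗ[ℂ] E := LinearEquiv.ofBijective M.toLinearMap ⟨hinj, hsurj⟩
  let e' : E ≃L[ℂ] E := e.toContinuousLinearEquiv
  have he' : (e' : E →L[ℂ] E) = M := by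
    ext v; rfl
  have hun : IsUnit M := by
    refine ⟨⟨M, (e'.symm : E →L[ℂ] E), ?_, ?_⟩, rfl⟩
    · ext v
      simp only [ContinuousLinearMap.mul_apply, ContinuousLinearMap.one_apply]
      rw [← he']
      exact e'.apply_symm_apply v
    · ext v
      simp only [ContinuousLinearMap.mul_apply, ContinuousLinearMap.one_apply]
      rw [← he']
      exact e'.symm_apply_apply v
  exact (spectrum.mem_iff.mp hz) hun

/-- Lemma 4.1: `σ(S_L) ⊆ Q(σ(A))`, and for `z ∉ Q(σ(A))` one has
`|⟨(A − z)ψ, (A − conj z)ψ⟩| ≥ dist(z, Q(σ(A)))² ‖ψ‖²` for all `ψ`. -/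
theorem stmt10 (A : H →L[ℂ] H) (hA : IsStarNormal A) (L : Submodule ℂ H)
    [FiniteDimensional ℂ ↥L] :
    spectrum ℂ (SL A L) ⊆ QSet (spectrum ℂ A) ∧
      ∀ z ∉ QSet (spectrum ℂ A), ∀ ψ : H,
        Metric.infDist z (QSet (spectrum ℂ A)) ^ 2 * ‖ψ‖ ^ 2 ≤
          ‖⟪(A - z • 1) ψ, (A - (conj z) • 1) ψ⟫_ℂ‖ := by
  haveI := hA
  -- central fact, combining the numerical range lemma with cfc spectral mapping
  have key : ∀ z : ℂ, ∀ ψ : H, ψ ≠ 0 →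
      ⟪ψ, ((star A - z • 1) * (A - z • 1)) ψ⟫_ℂ / ((‖ψ‖ : ℂ) ^ 2)
        ∈ closure (convexHull ℝ (sigmaSet (spectrum ℂ A) z)) := by
    intro z ψ hψ
    have hcfc : cfc (fun l : ℂ => (l - z) * ((starRingEnd ℂ) l - z)) A
        = (star A - z • 1) * (A - z • 1) := cfc_eq2 A hA z
    have hnorm : IsStarNormal ((star A - z • 1) * (A - z • 1)) := by
      rw [← hcfc]; exact cfc_predicate _ _
    have hsp : spectrum ℂ ((star A - z • 1) * (A - z • 1)) = sigmaSet (spectrum ℂ A) z := by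
      rw [← hcfc]
      exact cfc_map_spectrum _ _ hA
        (((continuous_id.sub continuous_const).mul
          (Complex.continuous_conj.sub continuous_const)).continuousOn)
    have h := lemN _ hnorm hψ
    rwa [hsp] at h
  -- relating the quadratic form of the key operator to the inner product of the statement
  have hform : ∀ z : ℂ, ∀ ψ : H,
      ⟪ψ, ((star A - z • 1) * (A - z • 1)) ψ⟫_ℂ
        = (starRingEnd ℂ) (⟪(A - z • 1) ψ, (A - (conj z) • 1) ψ⟫_ℂ) := by
    intro z ψ
    have hadj : (star A - z • 1) = ContinuousLinearMap.adjoint (A - (conj z) • 1) := by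
      rw [← star_eq_adjoint, star_sub, star_smul, star_one]
      simp
    have h1 : ((star A - z • 1) * (A - z • 1)) ψ = (star A - z • 1) ((A - z • 1) ψ) := rfl
    rw [h1, hadj, ContinuousLinearMap.adjoint_inner_right, ← inner_conj_symm]
  -- the projection onto L
  have hProj : projCLM L = L.orthogonalProjectionOnto := by
    rw [projCLM, dif_pos]
  constructor
  · -- spectral inclusion
    intro z hz
    obtain ⟨v, hv0, hveq⟩ := exists_eigen (SL A L) hz
    -- unpack the eigenvalue equation
    have happ : SL A L v
        = (compress (A + ContinuousLinearMap.adjoint A) L v.1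
            - compress (ContinuousLinearMap.adjoint A * A) L v.2, v.1) := by
      simp only [SL, block2, ContinuousLinearMap.prod_apply, ContinuousLinearMap.add_apply,
        ContinuousLinearMap.comp_apply, ContinuousLinearMap.coe_fst', ContinuousLinearMap.coe_snd',
        ContinuousLinearMap.neg_apply, ContinuousLinearMap.one_apply,
        ContinuousLinearMap.zero_apply]
      rw [sub_eq_add_neg, add_zero]
    rw [happ] at hveq
    have h2 : v.1 = z • v.2 := congrArg Prod.snd hveq
    have hv2 : v.2 ≠ 0 := by
      intro h0
      apply hv0
      have : v.1 = 0 := by rw [h2, h0, smul_zero]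
      exact Prod.ext this h0
    have h1 : compress (A + ContinuousLinearMap.adjoint A) L (z • v.2)
        - compress (ContinuousLinearMap.adjoint A * A) L v.2 = (z * z) • v.2 := by
      have h : compress (A + ContinuousLinearMap.adjoint A) L v.1
          - compress (ContinuousLinearMap.adjoint A * A) L v.2 = z • v.1 :=
        congrArg Prod.fst hveq
      rw [h2] at h
      rw [smul_smul] at h
      exact h
    set φ : H := (v.2 : H) with hphi
    have hφmem : φ ∈ L := v.2.2
    have hφne : φ ≠ 0 := by
      simpa [hphi, Submodule.coe_eq_zero] using hv2
    have hCφ : ((star A - z • 1) * (A - z • 1)) φ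
        = ((ContinuousLinearMap.adjoint A * A) φ)
          - z • ((A + ContinuousLinearMap.adjoint A) φ) + (z * z) • φ := by
      rw [star_eq_adjoint]
      simp only [ContinuousLinearMap.mul_apply, ContinuousLinearMap.sub_apply,
        ContinuousLinearMap.smul_apply, ContinuousLinearMap.one_apply,
        ContinuousLinearMap.add_apply, map_sub, map_smul]
      module
    have hP : projCLM L (((star A - z • 1) * (A - z • 1)) φ) = 0 := by
      rw [hCφ, map_add, map_sub, map_smul, map_smul]
      have e1 : projCLM L ((ContinuousLinearMap.adjoint A * A) φ)
          = compress (ContinuousLinearMap.adjoint A * A) L v.2 := rfl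
      have e2 : projCLM L ((A + ContinuousLinearMap.adjoint A) φ)
          = compress (A + ContinuousLinearMap.adjoint A) L v.2 := rfl
      have e3 : projCLM L φ = v.2 := by
        rw [hProj]
        exact Submodule.orthogonalProjectionOnto_mem_subspace_eq_self v.2
      rw [e1, e2, e3]
      have h1' : z • compress (A + ContinuousLinearMap.adjoint A) L v.2
          - compress (ContinuousLinearMap.adjoint A * A) L v.2 = (z * z) • v.2 := by
        rw [← map_smul]; exact h1
      rw [← h1']
      module
    have horth : ((star A - z • 1) * (A - z • 1)) φ ∈ Lᗮ := by
      rw [hProj] at hP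
      exact Submodule.orthogonalProjectionOnto_eq_zero_iff.mp hP
    have hinner0 : ⟪φ, ((star A - z • 1) * (A - z • 1)) φ⟫_ℂ = 0 :=
      (Submodule.mem_orthogonal L _).mp horth φ hφmem
    have hk := key z φ hφne
    rw [hinner0, zero_div] at hk
    exact hk
  · -- the inequality
    intro z hzQ ψ
    by_cases hψ : ψ = 0
    · subst hψ
      simp
    · have h := key z ψ hψ
      have hG := lemG (spectrum ℂ A) z h
      rw [hform z ψ] at hG
      have habs : ‖(starRingEnd ℂ) (⟪(A - z • 1) ψ, (A - (conj z) • 1) ψ⟫_ℂ)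
          / ((‖ψ‖ : ℂ) ^ 2)‖
          = ‖⟪(A - z • 1) ψ, (A - (conj z) • 1) ψ⟫_ℂ‖ / ‖ψ‖ ^ 2 := by
        rw [norm_div, Complex.norm_conj]
        congr 1
        rw [norm_pow, Complex.norm_real, norm_norm]
      rw [habs] at hG
      have hne : (0 : ℝ) < ‖ψ‖ ^ 2 := pow_pos (norm_pos_iff.mpr hψ) 2
      calc Metric.infDist z (QSet (spectrum ℂ A)) ^ 2 * ‖ψ‖ ^ 2
          ≤ (‖⟪(A - z • 1) ψ, (A - (conj z) • 1) ψ⟫_ℂ‖ / ‖ψ‖ ^ 2) * ‖ψ‖ ^ 2 :=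
            mul_le_mul_of_nonneg_right hG (le_of_lt hne)
        _ = ‖⟪(A - z • 1) ψ, (A - (conj z) • 1) ψ⟫_ℂ‖ := by
            field_simp

end
end

section
/- Let A be a bounded normal operator on a complex Hilbert space H and (L_n) ∈ Λ with associated operators S_n := S_{L_n}. If z ∉ Q(σ_ess(A)) and there exist z_n ∈ σ(S_n) with z_n → z, then z ∈ σ_dis(A) ∪ σ_dis(A*). -/
open scoped InnerProductSpace ComplexConjugate Classical
open Complex ContinuousLinearMap

noncomputable section

variable {H : Type*} [NormedAddCommGroup H] [InnerProductSpace ℂ H] [CompleteSpace H]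

/-- The essential spectrum: the spectrum of the image in the Calkin algebra, i.e. the set of
`z` such that `A − z` is not invertible modulo compact operators. -/
def essSpectrum (A : H →L[ℂ] H) : Set ℂ :=
  {z | ¬ ∃ B : H →L[ℂ] H, IsCompactOperator ⇑(B * (A - z • 1) - 1) ∧
        IsCompactOperator ⇑((A - z • 1) * B - 1)}

/-- The discrete spectrum: isolated points of the spectrum which are eigenvalues of finite
multiplicity. -/
def discSpectrum (A : H →L[ℂ] H) : Set ℂ :=
  {z | z ∈ spectrum ℂ A ∧ (∃ ε > 0, ∀ w ∈ spectrum ℂ A, dist w z < ε → w = z) ∧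
    LinearMap.ker ((A - z • 1 : H →L[ℂ] H) : H →ₗ[ℂ] H) ≠ ⊥ ∧
    FiniteDimensional ℂ ↥(LinearMap.ker ((A - z • 1 : H →L[ℂ] H) : H →ₗ[ℂ] H))}

/-- Orthogonal projection onto a subspace, as an endomorphism of the ambient space. -/
def projAmb (L : Submodule ℂ H) : H →L[ℂ] H := L.subtypeL ∘L projCLM L

set_option linter.unusedSectionVars false
set_option linter.unusedVariables false
set_option linter.unnecessarySimpa false
set_option linter.unusedTactic false

/-- `T_w = (A* - w)(A - w)`. -/
def Tz (A : H →L[ℂ] H) (w : ℂ) : H →L[ℂ] H :=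
  (ContinuousLinearMap.adjoint A - w • 1) * (A - w • 1)

section AuxA
variable (A : H →L[ℂ] H) (hA : IsStarNormal A)
include hA

lemma aux_adj_cfc : cfc (fun l : ℂ => (starRingEnd ℂ) l) A = ContinuousLinearMap.adjoint A := by
  have h := cfc_star_id (R := ℂ) (a := A)
  rw [ContinuousLinearMap.star_eq_adjoint] at h
  rw [← h]
  congr 1

lemma aux_tz_cfc (z : ℂ) :
    Tz A z = cfc (fun l : ℂ => ((starRingEnd ℂ) l - z) * (l - z)) A := by
  have h1 : ContinuousOn (fun l : ℂ => (starRingEnd ℂ) l - z) (spectrum ℂ A) :=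
    (Complex.continuous_conj.sub continuous_const).continuousOn
  have h2 : ContinuousOn (fun l : ℂ => l - z) (spectrum ℂ A) :=
    (continuous_id.sub continuous_const).continuousOn
  rw [cfc_mul (fun l : ℂ => (starRingEnd ℂ) l - z) (fun l : ℂ => l - z) A h1 h2,
    cfc_sub (fun l : ℂ => (starRingEnd ℂ) l) (fun _ : ℂ => z) A
      Complex.continuous_conj.continuousOn continuousOn_const,
    cfc_sub (fun l : ℂ => l) (fun _ : ℂ => z) A continuous_id.continuousOn continuousOn_const,
    aux_adj_cfc A hA, cfc_id' ℂ A, cfc_const z A, Algebra.algebraMap_eq_smul_one]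
  rfl

lemma aux_norm_adj_apply (w : ℂ) (x : H) :
    ‖(ContinuousLinearMap.adjoint A - (starRingEnd ℂ) w • 1) x‖ = ‖(A - w • 1) x‖ := by
  set B := A - w • 1 with hBdef
  have hstar : star B = ContinuousLinearMap.adjoint A - (starRingEnd ℂ) w • 1 := by
    rw [hBdef, star_sub, star_smul, star_one, ContinuousLinearMap.star_eq_adjoint, Complex.star_def]
  have hcomm : star B * B = B * star B := by
    have h1 : Commute (star A) A := hA.star_comm_self
    have h2 : Commute (star A) (w • (1 : H →L[ℂ] H)) := (Commute.one_right (star A)).smul_right w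
    have h3 : Commute ((starRingEnd ℂ) w • (1 : H →L[ℂ] H)) A := (Commute.one_left A).smul_left _
    have h4 : Commute ((starRingEnd ℂ) w • (1 : H →L[ℂ] H)) (w • (1 : H →L[ℂ] H)) :=
      ((Commute.refl (1 : H →L[ℂ] H)).smul_left _).smul_right _
    have : Commute (star B) B := by
      rw [hBdef, star_sub, star_smul, star_one]
      exact (h1.sub_left h3).sub_right (h2.sub_left h4)
    exact this
  have e1 : ⟪B x, B x⟫_ℂ = ⟪x, (star B * B) x⟫_ℂ := by
    rw [ContinuousLinearMap.mul_apply, star_eq_adjoint, adjoint_inner_right]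
  have e2 : ⟪(star B) x, (star B) x⟫_ℂ = ⟪x, (B * star B) x⟫_ℂ := by
    rw [ContinuousLinearMap.mul_apply, star_eq_adjoint, adjoint_inner_left]
  have : ‖B x‖ ^ 2 = ‖(star B) x‖ ^ 2 := by
    have := norm_sq_eq_re_inner (𝕜 := ℂ) (B x)
    rw [this, norm_sq_eq_re_inner (𝕜 := ℂ) ((star B) x), e1, e2, hcomm]
  rw [← hstar]
  nlinarith [norm_nonneg (B x), norm_nonneg ((star B) x)]

lemma aux_approx_eig {w : ℂ} (hw : w ∈ spectrum ℂ A) {ε : ℝ} (hε : 0 < ε) :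
    ∃ x : H, ‖x‖ = 1 ∧ ‖(A - w • 1) x‖ ≤ ε := by
  set ε' := ε / 2 with hε'
  have hε'pos : 0 < ε' := by positivity
  set g : ℂ → ℝ := fun l => max 0 (1 - ‖l - w‖ / ε') with hg
  have hgc : Continuous g :=
    continuous_const.max (continuous_const.sub (((continuous_id.sub continuous_const).norm).div_const _))
  set f : ℂ → ℂ := fun l => (g l : ℂ) with hf
  have hfc : Continuous f := Complex.continuous_ofReal.comp hgc
  set M := cfc f A with hM
  have hMnorm : (1 : ℝ) ≤ ‖M‖ := by
    have h := norm_apply_le_norm_cfc f A hw hfc.continuousOn hA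
    have hfw : ‖f w‖ = 1 := by
      have hgw : g w = 1 := by simp [hg]
      rw [hf]
      simp only [hgw]
      rw [Complex.norm_real, Real.norm_eq_abs]
      norm_num
    rw [hfw] at h
    exact h
  have hy : ∃ y : H, ¬ ‖M y‖ ≤ 2⁻¹ * ‖y‖ := by
    by_contra hcon
    push_neg at hcon
    have : ‖M‖ ≤ 2⁻¹ := M.opNorm_le_bound (by norm_num) fun y => hcon y
    linarith
  obtain ⟨y, hy⟩ := hy
  push_neg at hy
  have hMy0 : 0 < ‖M y‖ := lt_of_le_of_lt (by positivity) hy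
  refine ⟨((‖M y‖⁻¹ : ℝ) : ℂ) • M y, ?_, ?_⟩
  · rw [norm_smul, Complex.norm_real, Real.norm_eq_abs, _root_.abs_of_nonneg (by positivity),
      inv_mul_cancel₀ (ne_of_gt hMy0)]
  · have hcfc : (A - w • 1) * M = cfc (fun l : ℂ => (l - w) * f l) A := by
      rw [cfc_mul (fun l : ℂ => l - w) f A ((continuous_id.sub continuous_const).continuousOn)
        hfc.continuousOn, cfc_sub (fun l : ℂ => l) (fun _ : ℂ => w) A
        continuous_id.continuousOn continuousOn_const, cfc_id' ℂ A, cfc_const w A,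
        Algebra.algebraMap_eq_smul_one]
    have hbound : ‖(A - w • 1) * M‖ ≤ ε' := by
      rw [hcfc]
      refine norm_cfc_le hε'pos.le fun l hl => ?_
      rcases le_or_gt ‖l - w‖ ε' with hle | hgt
      · have hfl : ‖f l‖ ≤ 1 := by
          have h0 : 0 ≤ g l := le_max_left _ _
          have h1 : g l ≤ 1 := by
            apply max_le zero_le_one
            have : 0 ≤ ‖l - w‖ / ε' := by positivity
            linarith
          rw [hf]
          rw [Complex.norm_real, Real.norm_eq_abs, _root_.abs_of_nonneg h0]
          exact h1
        calc ‖(l - w) * f l‖ = ‖l - w‖ * ‖f l‖ := norm_mul _ _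
        _ ≤ ε' * 1 := mul_le_mul hle hfl (norm_nonneg _) hε'pos.le
        _ = ε' := mul_one _
      · have hg0 : g l = 0 := by
          apply max_eq_left
          rw [sub_nonpos, le_div_iff₀ hε'pos]
          linarith
        simp [hf, hg0]
        exact hε'pos.le
    calc ‖(A - w • 1) (((‖M y‖⁻¹ : ℝ) : ℂ) • M y)‖ = ‖M y‖⁻¹ * ‖(A - w • 1) (M y)‖ := by
          rw [map_smul, norm_smul, Complex.norm_real, Real.norm_eq_abs,
            _root_.abs_of_nonneg (by positivity)]
    _ = ‖M y‖⁻¹ * ‖((A - w • 1) * M) y‖ := by rw [ContinuousLinearMap.mul_apply]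
    _ ≤ ‖M y‖⁻¹ * (ε' * ‖y‖) := by
          refine mul_le_mul_of_nonneg_left ?_ (by positivity)
          calc ‖((A - w • 1) * M) y‖ ≤ ‖(A - w • 1) * M‖ * ‖y‖ := le_opNorm _ _
          _ ≤ ε' * ‖y‖ := mul_le_mul_of_nonneg_right hbound (norm_nonneg y)
    _ ≤ ‖M y‖⁻¹ * (ε' * (2 * ‖M y‖)) := by
          refine mul_le_mul_of_nonneg_left ?_ (by positivity)
          refine mul_le_mul_of_nonneg_left ?_ hε'pos.le
          nlinarith [hy]
    _ = ε' * 2 * (‖M y‖⁻¹ * ‖M y‖) := by ring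
    _ = ε := by rw [inv_mul_cancel₀ (ne_of_gt hMy0), hε']; ring

lemma aux_cfc_re_nonneg (g : ℂ → ℝ) (hg : ContinuousOn g (spectrum ℂ A))
    (hge : ∀ l ∈ spectrum ℂ A, 0 ≤ g l) (x : H) :
    0 ≤ (⟪x, (cfc (fun l => (g l : ℂ)) A) x⟫_ℂ).re := by
  set s : ℂ → ℂ := fun l => ((Real.sqrt (g l) : ℝ) : ℂ) with hs
  have hsc : ContinuousOn s (spectrum ℂ A) :=
    Complex.continuous_ofReal.comp_continuousOn (Real.continuous_sqrt.comp_continuousOn hg)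
  have hstar : star (cfc s A) = cfc s A := by
    rw [← cfc_star s A]
    apply cfc_congr
    intro l hl
    simp [hs, Complex.star_def, Complex.conj_ofReal]
  have h1 : cfc (fun l => (g l : ℂ)) A = star (cfc s A) * cfc s A := by
    rw [hstar, ← cfc_mul s s A hsc hsc]
    apply cfc_congr
    intro l hl
    show (g l : ℂ) = (↑(Real.sqrt (g l)) : ℂ) * ↑(Real.sqrt (g l))
    rw [← Complex.ofReal_mul, Real.mul_self_sqrt (hge l hl)]
  rw [h1, ContinuousLinearMap.mul_apply, star_eq_adjoint, adjoint_inner_right]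
  exact inner_self_nonneg (𝕜 := ℂ) (x := (cfc s A) x)

omit hA in
lemma aux_ker_findim {w : ℂ} (hw : w ∉ essSpectrum A) :
    FiniteDimensional ℂ ↥(LinearMap.ker ((A - w • 1 : H →L[ℂ] H) : H →ₗ[ℂ] H)) := by
  have hex : ∃ B : H →L[ℂ] H, IsCompactOperator ⇑(B * (A - w • 1) - 1) ∧
      IsCompactOperator ⇑((A - w • 1) * B - 1) := by
    by_contra hcon
    exact hw hcon
  obtain ⟨B, hK1, _⟩ := hex
  set K := B * (A - w • 1) - 1 with hKdef
  set N := LinearMap.ker ((A - w • 1 : H →L[ℂ] H) : H →ₗ[ℂ] H) with hN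
  have hNclosed : IsClosed (N : Set H) := isClosed_ker (A - w • 1)
  have hKneg : IsCompactOperator ⇑(-K) := by
    have h := hK1.neg
    have : (⇑(-K) : H → H) = -⇑K := by ext v; simp
    rw [this]
    exact h
  have hSc : IsCompact (closure (⇑(-K) '' Metric.closedBall 0 1)) :=
    IsCompactOperator.isCompact_closure_image_closedBall
      (f := ((-K : H →L[ℂ] H) : H →ₗ[ℂ] H)) hKneg 1
  have hTsub : {x : H | x ∈ N ∧ ‖x‖ ≤ 1} ⊆ closure (⇑(-K) '' Metric.closedBall 0 1) := by
    rintro x ⟨hxN, hxn⟩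
    apply subset_closure
    refine ⟨x, by simpa [dist_zero_right] using hxn, ?_⟩
    have hx0 : (A - w • 1) x = 0 := hxN
    simp [hKdef, ContinuousLinearMap.neg_apply, sub_apply, ContinuousLinearMap.mul_apply, hx0, ContinuousLinearMap.one_apply]
  have hTcomp : IsCompact {x : H | x ∈ N ∧ ‖x‖ ≤ 1} := by
    refine IsCompact.of_isClosed_subset hSc ?_ hTsub
    exact hNclosed.inter (isClosed_le continuous_norm continuous_const)
  have hball : IsCompact (Metric.closedBall (0 : ↥N) 1) := by
    rw [Subtype.isCompact_iff]
    have himg : ((↑) : ↥N → H) '' Metric.closedBall 0 1 = {x : H | x ∈ N ∧ ‖x‖ ≤ 1} := by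
      ext x
      constructor
      · rintro ⟨⟨v, hv⟩, hvb, rfl⟩
        refine ⟨hv, ?_⟩
        have := Metric.mem_closedBall.mp hvb
        rw [dist_zero_right] at this
        exact this
      · rintro ⟨hxN, hxn⟩
        refine ⟨⟨x, hxN⟩, ?_, rfl⟩
        rw [Metric.mem_closedBall, dist_zero_right]
        exact hxn
    rw [himg]
    exact hTcomp
  exact FiniteDimensional.of_isCompact_closedBall₀ (𝕜 := ℂ) zero_lt_one hball

end AuxA

lemma aux_ess_subset (A : H →L[ℂ] H) : essSpectrum A ⊆ spectrum ℂ A := by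
  intro w hw
  by_contra hsp
  rw [spectrum.notMem_iff] at hsp
  obtain ⟨u, hu⟩ := hsp.neg
  have hu' : (u : H →L[ℂ] H) = A - w • 1 := by
    rw [hu, neg_sub, Algebra.algebraMap_eq_smul_one]
  refine hw ⟨↑u⁻¹, ?_, ?_⟩
  · have : (↑u⁻¹ : H →L[ℂ] H) * (A - w • 1) - 1 = 0 := by rw [← hu', u.inv_mul]; simp
    rw [this]; simpa using isCompactOperator_zero
  · have : (A - w • 1) * (↑u⁻¹ : H →L[ℂ] H) - 1 = 0 := by rw [← hu', u.mul_inv]; simp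
    rw [this]; simpa using isCompactOperator_zero

lemma aux_tz_cont (A : H →L[ℂ] H) : Continuous fun w : ℂ => Tz A w := by
  unfold Tz
  fun_prop

lemma aux_sep {S : Set ℂ} {z : ℂ} (hz : z ∉ QSet S) :
    ∃ (c : ℂ) (γ : ℝ), 0 < γ ∧ ∀ s ∈ sigmaSet S z, γ ≤ (c * s).re := by
  have hcv : Convex ℝ (closure (convexHull ℝ (sigmaSet S z))) := (convex_convexHull ℝ _).closure
  obtain ⟨f, u, hfu, hb⟩ := geometric_hahn_banach_point_closed hcv isClosed_closure hz
  have hf0 : f 0 = 0 := map_zero f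
  refine ⟨(f 1 : ℝ) - (f I : ℝ) * I, u, by simpa [hf0] using hfu, ?_⟩
  intro s hs
  have hsmem : s ∈ closure (convexHull ℝ (sigmaSet S z)) :=
    subset_closure (subset_convexHull ℝ _ hs)
  have hfs : u ≤ f s := (hb s hsmem).le
  have hdec : f s = s.re * f 1 + s.im * f I := by
    have : s = s.re • (1 : ℂ) + s.im • I := by
      simp [real_smul]
    calc f s = f (s.re • (1 : ℂ) + s.im • I) := by rw [← this]
    _ = s.re * f 1 + s.im * f I := by rw [map_add, map_smul, map_smul]; rfl
  have hre : ((((f 1 : ℝ) : ℂ) - (f I : ℝ) * I) * s).re = s.re * f 1 + s.im * f I := by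
    simp [Complex.mul_re, Complex.sub_re, Complex.sub_im, Complex.mul_im]
    ring
  rw [hre, ← hdec]
  exact hfs

lemma aux_eig_findim {V : Type*} [NormedAddCommGroup V] [NormedSpace ℂ V]
    [FiniteDimensional ℂ V] (T : V →L[ℂ] V) {w : ℂ} (hw : w ∈ spectrum ℂ T) :
    ∃ v : V, v ≠ 0 ∧ T v = w • v := by
  by_contra hcon
  push_neg at hcon
  rw [spectrum.mem_iff] at hw
  apply hw
  set f : V →L[ℂ] V := algebraMap ℂ (V →L[ℂ] V) w - T with hf
  have hinj : Function.Injective f := by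
    rw [injective_iff_map_eq_zero]
    intro v hv
    by_contra hv0
    exact hcon v hv0 (by
      have : w • v - T v = 0 := by
        simpa [hf, Algebra.algebraMap_eq_smul_one] using hv
      linear_combination (norm := module) -this)
  have hbij : Function.Bijective (f : V →ₗ[ℂ] V) :=
    ⟨hinj, (LinearMap.injective_iff_surjective).mp hinj⟩
  let e : V ≃ₗ[ℂ] V := LinearEquiv.ofBijective (f : V →ₗ[ℂ] V) hbij
  let E : V ≃L[ℂ] V := e.toContinuousLinearEquiv
  have hE : (E : V →L[ℂ] V) = f := by
    ext v; rfl
  refine ⟨⟨f, E.symm, ?_, ?_⟩, rfl⟩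
  · ext v
    simp only [ContinuousLinearMap.mul_apply, ContinuousLinearMap.one_apply, ← hE]
    exact E.apply_symm_apply v
  · ext v
    simp only [ContinuousLinearMap.mul_apply, ContinuousLinearMap.one_apply, ← hE]
    exact E.symm_apply_apply v

lemma aux_compact_of_finrank (f : H →L[ℂ] H) (W : Submodule ℂ H) [FiniteDimensional ℂ W]
    (h : ∀ x, f x ∈ W) : IsCompactOperator ⇑f := by
  refine ⟨Subtype.val '' Metric.closedBall (0 : ↥W) ‖f‖, ?_, ?_⟩
  · exact (ProperSpace.isCompact_closedBall _ _).image continuous_subtype_val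
  · have hsub : Metric.ball (0 : H) 1 ⊆ ⇑f ⁻¹' (Subtype.val '' Metric.closedBall (0 : ↥W) ‖f‖) := by
      intro x hx
      refine ⟨⟨f x, h x⟩, ?_, rfl⟩
      rw [Metric.mem_closedBall]
      simp only [dist_zero_right]
      calc ‖(⟨f x, h x⟩ : ↥W)‖ = ‖f x‖ := rfl
      _ ≤ ‖f‖ * ‖x‖ := f.le_opNorm x
      _ ≤ ‖f‖ * 1 := by
          have := (Metric.mem_ball.mp hx)
          rw [dist_zero_right] at this
          exact mul_le_mul_of_nonneg_left this.le (norm_nonneg f)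
      _ = ‖f‖ := mul_one _
    exact Filter.mem_of_superset (Metric.ball_mem_nhds 0 one_pos) hsub

lemma aux_weak_limit (U : Ultrafilter ℕ) (x : ℕ → H) (hb : ∀ n, ‖x n‖ ≤ 1) :
    ∃ φ : H, ‖φ‖ ≤ 1 ∧ ∀ y : H,
      Filter.Tendsto (fun n => ⟪x n, y⟫_ℂ) U (nhds ⟪φ, y⟫_ℂ) := by
  have key : ∀ y : H, ∃ l : ℂ, ‖l‖ ≤ ‖y‖ ∧
      Filter.Tendsto (fun n => ⟪x n, y⟫_ℂ) U (nhds l) := by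
    intro y
    have hmem : ∀ n, ⟪x n, y⟫_ℂ ∈ Metric.closedBall (0 : ℂ) ‖y‖ := by
      intro n
      rw [Metric.mem_closedBall, dist_zero_right]
      calc ‖⟪x n, y⟫_ℂ‖ ≤ ‖x n‖ * ‖y‖ := norm_inner_le_norm _ _
      _ ≤ 1 * ‖y‖ := by
          exact mul_le_mul_of_nonneg_right (hb n) (norm_nonneg y)
      _ = ‖y‖ := one_mul _
    have hcb : IsCompact (Metric.closedBall (0 : ℂ) ‖y‖) := ProperSpace.isCompact_closedBall _ _
    have hUm : ↑(Ultrafilter.map (fun n => ⟪x n, y⟫_ℂ) U) ≤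
        Filter.principal (Metric.closedBall (0 : ℂ) ‖y‖) := by
      rw [Filter.le_principal_iff, Ultrafilter.coe_map, Filter.mem_map]
      exact Filter.univ_mem' hmem
    obtain ⟨l, hl, hconv⟩ := hcb.ultrafilter_le_nhds _ hUm
    refine ⟨l, by simpa [dist_zero_right] using Metric.mem_closedBall.mp hl, hconv⟩
  choose l hl1 hl2 using key
  have hadd : ∀ y y', l (y + y') = l y + l y' := by
    intro y y'
    refine tendsto_nhds_unique ?_ ((hl2 y).add (hl2 y'))
    simpa [inner_add_right] using hl2 (y + y')
  have hsmul : ∀ (a : ℂ) y, l (a • y) = a * l y := by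
    intro a y
    refine tendsto_nhds_unique ?_ ((hl2 y).const_mul a)
    simpa [inner_smul_right] using hl2 (a • y)
  let G : H →ₗ[ℂ] ℂ :=
    { toFun := l
      map_add' := hadd
      map_smul' := fun a y => by simpa using hsmul a y }
  let G' : H →L[ℂ] ℂ := LinearMap.mkContinuous G 1 (fun y => by show ‖l y‖ ≤ 1 * ‖y‖; simpa using hl1 y)
  set φ := (InnerProductSpace.toDual ℂ H).symm G' with hφ
  have hφy : ∀ y, ⟪φ, y⟫_ℂ = l y := by
    intro y
    rw [hφ]
    exact InnerProductSpace.toDual_symm_apply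
  refine ⟨φ, ?_, fun y => by rw [hφy y]; exact hl2 y⟩
  · have : ‖G'‖ ≤ 1 := G.mkContinuous_norm_le zero_le_one _
    calc ‖φ‖ = ‖G'‖ := by rw [hφ]; exact (LinearIsometryEquiv.norm_map _ _)
    _ ≤ 1 := this

lemma aux_ess_of_acc (A : H →L[ℂ] H) (hA : IsStarNormal A) {w : ℂ}
    (hacc : ∀ ε > (0:ℝ), ∃ v ∈ spectrum ℂ A, v ≠ w ∧ dist v w < ε) :
    w ∈ essSpectrum A := by
  by_contra hw
  have hex : ∃ B : H →L[ℂ] H, IsCompactOperator ⇑(B * (A - w • 1) - 1) ∧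
      IsCompactOperator ⇑((A - w • 1) * B - 1) := by
    by_contra hcon; exact hw hcon
  obtain ⟨B, hK1, -⟩ := hex
  set K := B * (A - w • 1) - 1 with hKdef
  -- construct a sequence of distinct spectral points converging to w
  set T := {p : ℂ // p ∈ spectrum ℂ A ∧ p ≠ w} with hT
  have hstep : ∀ (p : T) (k : ℕ), ∃ q : T, dist (q : ℂ) w < min (dist (p : ℂ) w) (1/(k+1)) := by
    intro p k
    have hpos : 0 < min (dist (p : ℂ) w) (1/(k+1)) :=
      lt_min (dist_pos.mpr p.2.2) (by positivity)
    obtain ⟨v, h1, h2, h3⟩ := hacc _ hpos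
    exact ⟨⟨v, h1, h2⟩, h3⟩
  choose nxt hnxt using hstep
  obtain ⟨v0, hv01, hv02, hv03⟩ := hacc 1 one_pos
  set p0 : T := ⟨v0, hv01, hv02⟩ with hp0
  set vs : ℕ → T := fun k => Nat.rec p0 (fun k ih => nxt ih k) k with hvs
  have hrec : ∀ k, vs (k+1) = nxt (vs k) k := fun k => rfl
  set e : ℕ → ℝ := fun k => dist (vs k : ℂ) w with he
  have hepos : ∀ k, 0 < e k := fun k => dist_pos.mpr (vs k).2.2
  have hlt : ∀ k, e (k+1) < min (e k) (1/(k+1)) := by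
    intro k
    show dist ((vs (k+1) : ℂ)) w < min (dist ((vs k : ℂ)) w) (1/(k+1))
    rw [hrec k]
    exact hnxt (vs k) k
  have hdec : ∀ k, e (k+1) < e k := fun k => (hlt k).trans_le (min_le_left _ _)
  have hanti : StrictAnti e := strictAnti_nat_of_succ_lt hdec
  have hebound : ∀ k, e (k+1) < 1/(k+1) := fun k => (hlt k).trans_le (min_le_right _ _)
  have he0 : Filter.Tendsto e Filter.atTop (nhds 0) := by
    have h1 : Filter.Tendsto (fun k : ℕ => e (k+1)) Filter.atTop (nhds 0) := by
      apply squeeze_zero (fun k => (hepos (k+1)).le) (fun k => (hebound k).le)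
      exact tendsto_one_div_add_atTop_nhds_zero_nat
    exact (Filter.tendsto_add_atTop_iff_nat 1).mp h1
  -- εs
  set m : ℕ → ℝ := fun k => (Finset.range (k+1)).inf' (by simp) (fun j => e j - e (j+1)) with hm
  have hmpos : ∀ k, 0 < m k := by
    intro k
    rw [hm]
    simp only
    rw [Finset.lt_inf'_iff]
    intro j hj
    have := hdec j
    linarith
  have hmle : ∀ j k, j ≤ k → m k ≤ e j - e (j+1) := by
    intro j k hjk
    exact Finset.inf'_le _ (by simp [Finset.mem_range]; omega)
  have hmlee : ∀ k, m k ≤ e k := by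
    intro k
    have := hmle k k le_rfl
    have := (hepos (k+1)).le
    linarith
  have hm0 : Filter.Tendsto (fun k => m k) Filter.atTop (nhds 0) := by
    apply squeeze_zero (fun k => (hmpos k).le) hmlee he0
  set εs : ℕ → ℝ := fun k => m k / 4 with hεs
  have hεpos : ∀ k, 0 < εs k := fun k => div_pos (hmpos k) (by norm_num)
  -- approximate eigenvectors
  have hx : ∀ k, ∃ x : H, ‖x‖ = 1 ∧ ‖(A - (vs k : ℂ) • 1) x‖ ≤ εs k :=
    fun k => aux_approx_eig A hA (vs k).2.1 (hεpos k)
  choose x hx1 hx2 using hx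
  have hx2' : ∀ k, ‖(ContinuousLinearMap.adjoint A - (starRingEnd ℂ) (vs k : ℂ) • 1) (x k)‖ ≤ εs k := by
    intro k
    rw [aux_norm_adj_apply A hA]
    exact hx2 k
  -- distances between spectral points
  have hdistlb : ∀ j k, j < k → e j - e (j+1) ≤ dist ((vs j : ℂ)) ((vs k : ℂ)) := by
    intro j k hjk
    have h1 : e k ≤ e (j+1) := by
      rcases eq_or_lt_of_le (Nat.succ_le_of_lt hjk) with h | h
      · rw [← h]
      · exact (hanti h).le
    have h2 : e j - e k ≤ dist ((vs j : ℂ)) ((vs k : ℂ)) := by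
      have := dist_triangle ((vs j : ℂ)) ((vs k : ℂ)) w
      rw [he]
      simp only at this ⊢
      linarith [this]
    linarith
  -- almost orthogonality
  have horth : ∀ j k, j < k → ‖⟪x j, x k⟫_ℂ‖ ≤ 1/2 := by
    intro j k hjk
    set d := dist ((vs j : ℂ)) ((vs k : ℂ)) with hd
    have hdpos : 0 < d := by
      rw [hd, dist_pos]
      intro hcon
      have : e j = e k := by rw [he]; simp only; rw [hcon]
      have := hanti hjk
      linarith
    have hkey : ((starRingEnd ℂ) ((vs j : ℂ)) - (starRingEnd ℂ) ((vs k : ℂ))) * ⟪x j, x k⟫_ℂ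
        = ⟪x j, (ContinuousLinearMap.adjoint A - (starRingEnd ℂ) ((vs k : ℂ)) • 1) (x k)⟫_ℂ
          - ⟪(A - (vs j : ℂ) • 1) (x j), x k⟫_ℂ := by
      have h1 : ⟪x j, (ContinuousLinearMap.adjoint A) (x k)⟫_ℂ = ⟪A (x j), x k⟫_ℂ :=
        adjoint_inner_right A (x j) (x k)
      simp only [sub_apply, smul_apply, ContinuousLinearMap.one_apply, inner_sub_right, inner_sub_left,
        inner_smul_right, inner_smul_left, h1]
      ring
    have habs : d * ‖⟪x j, x k⟫_ℂ‖ ≤ εs k + εs j := by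
      have hlhs : ‖((starRingEnd ℂ) ((vs j : ℂ)) - (starRingEnd ℂ) ((vs k : ℂ))) * ⟪x j, x k⟫_ℂ‖
          = d * ‖⟪x j, x k⟫_ℂ‖ := by
        rw [norm_mul]
        congr 1
        rw [← map_sub]
        rw [hd, Complex.dist_eq]
        exact RCLike.norm_conj _
      rw [← hlhs, hkey]
      calc ‖⟪x j, (ContinuousLinearMap.adjoint A - (starRingEnd ℂ) ((vs k : ℂ)) • 1) (x k)⟫_ℂ
          - ⟪(A - (vs j : ℂ) • 1) (x j), x k⟫_ℂ‖
          ≤ ‖⟪x j, (ContinuousLinearMap.adjoint A - (starRingEnd ℂ) ((vs k : ℂ)) • 1) (x k)⟫_ℂ‖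
            + ‖⟪(A - (vs j : ℂ) • 1) (x j), x k⟫_ℂ‖ := norm_sub_le _ _
      _ ≤ ‖x j‖ * ‖(ContinuousLinearMap.adjoint A - (starRingEnd ℂ) ((vs k : ℂ)) • 1) (x k)‖
            + ‖(A - (vs j : ℂ) • 1) (x j)‖ * ‖x k‖ :=
          add_le_add (norm_inner_le_norm _ _) (norm_inner_le_norm _ _)
      _ ≤ 1 * εs k + εs j * 1 := by
          apply add_le_add
          · rw [hx1 j]; exact mul_le_mul_of_nonneg_left (hx2' k) zero_le_one
          · rw [hx1 k]; exact mul_le_mul_of_nonneg_right (hx2 j) zero_le_one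
      _ = εs k + εs j := by ring
    have hεsj : εs j ≤ d / 4 := by
      have : m j ≤ e j - e (j+1) := hmle j j le_rfl
      have hd2 : e j - e (j+1) ≤ d := hdistlb j k hjk
      rw [hεs]
      simp only
      linarith
    have hεsk : εs k ≤ d / 4 := by
      have : m k ≤ e j - e (j+1) := hmle j k hjk.le
      have hd2 : e j - e (j+1) ≤ d := hdistlb j k hjk
      rw [hεs]
      simp only
      linarith
    have hfin : d * ‖⟪x j, x k⟫_ℂ‖ ≤ d / 2 := by linarith
    nlinarith [norm_nonneg ⟪x j, x k⟫_ℂ]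
  -- the compactness contradiction
  have hxK : ∀ k, x k + K (x k) = B ((A - w • 1) (x k)) := by
    intro k
    have hK : K (x k) = B ((A - w • 1) (x k)) - x k := by
      simp [hKdef, sub_apply, ContinuousLinearMap.mul_apply, ContinuousLinearMap.one_apply]
    rw [hK]
    abel
  have hεs0 : Filter.Tendsto εs Filter.atTop (nhds 0) := by
    have := hm0.div_const 4
    simpa [hεs] using this
  have hnorm0 : Filter.Tendsto (fun k => ‖x k + K (x k)‖) Filter.atTop (nhds 0) := by
    apply squeeze_zero (fun k => norm_nonneg _) (g := fun k => ‖B‖ * (εs k + e k))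
    · intro k
      rw [hxK k]
      calc ‖B ((A - w • 1) (x k))‖ ≤ ‖B‖ * ‖(A - w • 1) (x k)‖ := B.le_opNorm _
      _ ≤ ‖B‖ * (εs k + e k) := by
          refine mul_le_mul_of_nonneg_left ?_ (norm_nonneg B)
          have hsplit : (A - w • 1) (x k) = (A - (vs k : ℂ) • 1) (x k) + ((vs k : ℂ) - w) • x k := by
            simp only [sub_apply, smul_apply, ContinuousLinearMap.one_apply, sub_smul]
            abel
          rw [hsplit]
          calc ‖(A - (vs k : ℂ) • 1) (x k) + ((vs k : ℂ) - w) • x k‖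
              ≤ ‖(A - (vs k : ℂ) • 1) (x k)‖ + ‖((vs k : ℂ) - w) • x k‖ := norm_add_le _ _
          _ ≤ εs k + e k := by
              refine add_le_add (hx2 k) ?_
              rw [norm_smul, hx1 k, mul_one, he]
              simp only
              rw [dist_eq_norm]
    · have h1 := hεs0.add he0
      have h2 := h1.const_mul ‖B‖
      simpa using h2
  have hT0 : IsCompact (closure (⇑K '' Metric.closedBall 0 1)) :=
    IsCompactOperator.isCompact_closure_image_closedBall (f := (K : H →ₗ[ℂ] H)) hK1 1
  have hmemT0 : ∀ k, K (x k) ∈ closure (⇑K '' Metric.closedBall 0 1) := by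
    intro k
    apply subset_closure
    refine ⟨x k, ?_, rfl⟩
    rw [Metric.mem_closedBall, dist_zero_right, hx1 k]
  obtain ⟨u, hu, φ, hφmono, hφconv⟩ := hT0.tendsto_subseq hmemT0
  have hxconv : Filter.Tendsto (fun i => x (φ i)) Filter.atTop (nhds (-u)) := by
    have h0 : Filter.Tendsto (fun k => x k + K (x k)) Filter.atTop (nhds 0) :=
      tendsto_zero_iff_norm_tendsto_zero.mpr hnorm0
    have h1 : Filter.Tendsto (fun i => x (φ i) + K (x (φ i))) Filter.atTop (nhds 0) :=
      h0.comp hφmono.tendsto_atTop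
    have h2 := h1.sub hφconv
    simpa using h2
  have hnormu : ‖u‖ = 1 := by
    have h2 : Filter.Tendsto (fun i => ‖x (φ i)‖) Filter.atTop (nhds ‖-u‖) := hxconv.norm
    have h3 : Filter.Tendsto (fun i => ‖x (φ i)‖) Filter.atTop (nhds 1) := by
      simpa [hx1] using (tendsto_const_nhds : Filter.Tendsto (fun _ : ℕ => (1:ℝ)) Filter.atTop _)
    have := tendsto_nhds_unique h2 h3
    rwa [norm_neg] at this
  have hinner : Filter.Tendsto (fun i => ⟪x (φ i), x (φ (i+1))⟫_ℂ) Filter.atTop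
      (nhds ⟪(-u : H), -u⟫_ℂ) := by
    have h2 : Filter.Tendsto (fun i => x (φ (i+1))) Filter.atTop (nhds (-u)) :=
      hxconv.comp (Filter.tendsto_add_atTop_nat 1)
    exact hxconv.inner h2
  have hle : ‖⟪(-u : H), -u⟫_ℂ‖ ≤ 1/2 := by
    apply le_of_tendsto hinner.norm
    filter_upwards with i
    exact horth (φ i) (φ (i+1)) (hφmono (lt_add_one i))
  have heq : ‖⟪(-u : H), -u⟫_ℂ‖ = 1 := by
    rw [inner_neg_neg]
    rw [@inner_self_eq_norm_sq_to_K ℂ]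
    rw [hnormu]
    norm_num
  rw [heq] at hle
  linarith

lemma aux_cfc_compact (A : H →L[ℂ] H) (hA : IsStarNormal A) (g : ℂ → ℝ)
    (hg : ContinuousOn g (spectrum ℂ A))
    (hgle : ∀ l ∈ spectrum ℂ A, g l ≤ 0)
    (hess : ∀ l ∈ essSpectrum A, g l = 0) :
    IsCompactOperator ⇑(cfc (fun l => (g l : ℂ)) A) := by
  have hclosed : IsClosed { f : H →L[ℂ] H | IsCompactOperator f } :=
    isClosed_setOf_isCompactOperator
  suffices hmem : cfc (fun l => (g l : ℂ)) A ∈ closure { f : H →L[ℂ] H | IsCompactOperator f } by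
    rwa [hclosed.closure_eq] at hmem
  rw [Metric.mem_closure_iff]
  intro ε hε
  set ε' := ε/2 with hε'def
  have hε'pos : 0 < ε' := by positivity
  set h : ℂ → ℝ := fun l => min (g l + ε') 0 with hh
  have houter : Continuous (fun t : ℝ => min t 0) := continuous_id.min continuous_const
  have hhc : ContinuousOn h (spectrum ℂ A) := houter.comp_continuousOn (hg.add continuousOn_const)
  -- the support set F
  set F := {l | l ∈ spectrum ℂ A ∧ g l + ε' ≤ 0} with hF
  have hFsub : F ⊆ spectrum ℂ A := fun l hl => hl.1
  have hFess : ∀ l ∈ F, l ∉ essSpectrum A := by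
    intro l hl hl'
    have h0 := hess l hl'
    have := hl.2
    rw [h0] at this
    linarith
  have hiso : ∀ l ∈ F, ∃ ρ > (0:ℝ), ∀ v ∈ spectrum ℂ A, dist v l < ρ → v = l := by
    intro l hl
    by_contra hcon
    push_neg at hcon
    refine hFess l hl (aux_ess_of_acc A hA ?_)
    intro δ hδ
    obtain ⟨v, hv1, hv2, hv3⟩ := hcon δ hδ
    exact ⟨v, hv1, hv3, hv2⟩
  choose! ρ hρpos hρiso using hiso
  have hFclosed : IsClosed F := by
    have : F = spectrum ℂ A ∩ g ⁻¹' Set.Iic (-ε') := by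
      ext l
      simp only [hF, Set.mem_setOf_eq, Set.mem_inter_iff, Set.mem_preimage, Set.mem_Iic]
      constructor
      · rintro ⟨h1, h2⟩; exact ⟨h1, by linarith⟩
      · rintro ⟨h1, h2⟩; exact ⟨h1, by linarith⟩
    rw [this]
    exact hg.preimage_isClosed_of_isClosed (spectrum.isClosed _) isClosed_Iic
  have hFcomp : IsCompact F := (spectrum.isCompact A).of_isClosed_subset hFclosed hFsub
  have hFfin : F.Finite := by
    have hcover : F ⊆ ⋃ l ∈ F, Metric.ball l (ρ l) := by
      intro l hl
      exact Set.mem_biUnion hl (Metric.mem_ball_self (hρpos l hl))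
    obtain ⟨t, htF, htfin, htcover⟩ :=
      hFcomp.elim_finite_subcover_image (fun l _ => Metric.isOpen_ball) hcover
    refine Set.Finite.subset htfin ?_
    intro x hx
    obtain ⟨l, hlt, hxball⟩ := Set.mem_iUnion₂.mp (htcover hx)
    have : x = l := hρiso l (htF hlt) x (hFsub hx) (Metric.mem_ball.mp hxball)
    rwa [this]
  set Fs := hFfin.toFinset with hFs
  set ind : ℂ → ℂ → ℂ := fun μ => Set.indicator {μ} (fun _ => (1:ℂ)) with hind
  have hindc : ∀ μ ∈ F, ContinuousOn (ind μ) (spectrum ℂ A) := by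
    intro μ hμ l hl
    rcases eq_or_ne l μ with rfl | hlμ
    · refine (continuousWithinAt_const (b := (1:ℂ))).congr_of_eventuallyEq ?_ ?_
      · filter_upwards [self_mem_nhdsWithin,
          mem_nhdsWithin_of_mem_nhds (Metric.ball_mem_nhds l (hρpos l hμ))] with v hv1 hv2
        have : v = l := hρiso l hμ v hv1 (Metric.mem_ball.mp hv2)
        simp [hind, this]
      · simp [hind]
    · refine (continuousWithinAt_const (b := (0:ℂ))).congr_of_eventuallyEq ?_ ?_
      · have hpos : 0 < dist l μ := dist_pos.mpr hlμ
        filter_upwards [mem_nhdsWithin_of_mem_nhds (Metric.ball_mem_nhds l hpos)] with v hv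
        have : v ≠ μ := by
          intro hvμ
          have hd := Metric.mem_ball.mp hv
          rw [hvμ, dist_comm] at hd
          exact lt_irrefl _ hd
        simp [hind, Set.indicator_of_notMem, this]
      · simp [hind, Set.indicator_of_notMem, hlμ]
  -- each spectral projection is compact
  have hproj : ∀ μ ∈ F, IsCompactOperator ⇑(cfc (ind μ) A) := by
    intro μ hμ
    have hμess : μ ∉ essSpectrum A := hFess μ hμ
    have hker : FiniteDimensional ℂ ↥(LinearMap.ker ((A - μ • 1 : H →L[ℂ] H) : H →ₗ[ℂ] H)) := aux_ker_findim A hμess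
    have hmul : (A - μ • 1) * cfc (ind μ) A = 0 := by
      have h1 : A - μ • 1 = cfc (fun l : ℂ => l - μ) A := by
        rw [cfc_sub (fun l : ℂ => l) (fun _ : ℂ => μ) A continuous_id.continuousOn
          continuousOn_const, cfc_id' ℂ A, cfc_const μ A, Algebra.algebraMap_eq_smul_one]
      rw [h1, ← cfc_mul (fun l : ℂ => l - μ) (ind μ) A
        ((continuous_id.sub continuous_const).continuousOn) (hindc μ hμ)]
      have hzero : (fun l : ℂ => (l - μ) * ind μ l) = fun _ => (0:ℂ) := by
        funext l
        rcases eq_or_ne l μ with rfl | hlμ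
        · simp
        · simp [hind, Set.indicator_of_notMem, hlμ]
      rw [hzero]
      exact cfc_zero ℂ A
    refine aux_compact_of_finrank _ (LinearMap.ker ((A - μ • 1 : H →L[ℂ] H) : H →ₗ[ℂ] H)) ?_
    intro x
    rw [LinearMap.mem_ker]
    have : ((A - μ • 1) * cfc (ind μ) A) x = 0 := by rw [hmul]; rfl
    rwa [ContinuousLinearMap.mul_apply] at this
  -- h as a finite sum of indicators
  have hsum : cfc (fun l => (h l : ℂ)) A = ∑ μ ∈ Fs, ((h μ : ℂ) • cfc (ind μ) A) := by
    have hcongr : cfc (fun l => (h l : ℂ)) A = cfc (fun l => ∑ μ ∈ Fs, (h μ : ℂ) * ind μ l) A := by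
      apply cfc_congr
      intro l hl
      show (h l : ℂ) = ∑ μ ∈ Fs, (h μ : ℂ) * ind μ l
      by_cases hlF : l ∈ F
      · rw [Finset.sum_eq_single_of_mem l (hFfin.mem_toFinset.mpr hlF)]
        · simp [hind]
        · intro μ hμ hne
          simp [hind, Set.indicator_of_notMem, (Ne.symm hne)]
      · have h0 : h l = 0 := by
          have : ¬ (g l + ε' ≤ 0) := fun hcon => hlF ⟨hl, hcon⟩
          rw [hh]
          simp only
          rw [min_eq_right]
          linarith
        rw [h0]
        symm
        push_cast [Complex.ofReal_zero]
        rw [Finset.sum_eq_zero]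
        intro μ hμ
        have : l ≠ μ := by
          intro hlμ
          rw [hlμ] at hlF
          exact hlF (hFfin.mem_toFinset.mp hμ)
        simp [hind, Set.indicator_of_notMem, this]
    have hfun : (fun l => ∑ μ ∈ Fs, (h μ : ℂ) * ind μ l) = ∑ μ ∈ Fs, (fun l => (h μ : ℂ) * ind μ l) := by
      ext l
      simp
    rw [hcongr, hfun, cfc_sum (fun μ => (fun l => (h μ : ℂ) * ind μ l)) A Fs (fun μ hμ =>
      (continuousOn_const.mul (hindc μ (hFfin.mem_toFinset.mp hμ))))]
    apply Finset.sum_congr rfl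
    intro μ hμ
    rw [cfc_const_mul _ _ A (hindc μ (hFfin.mem_toFinset.mp hμ))]
  have hcompactsum : IsCompactOperator ⇑(∑ μ ∈ Fs, ((h μ : ℂ) • cfc (ind μ) A)) := by
    classical
    refine Finset.sum_induction _ (fun f : H →L[ℂ] H => IsCompactOperator ⇑f) ?_ ?_ ?_
    · intro a b ha hb
      exact ha.add hb
    · exact isCompactOperator_zero
    · intro μ hμ
      exact (hproj μ (hFfin.mem_toFinset.mp hμ)).smul ((h μ : ℂ))
  refine ⟨cfc (fun l => (h l : ℂ)) A, by rw [hsum]; exact hcompactsum, ?_⟩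
  -- distance estimate
  have hdist : dist (cfc (fun l => (g l : ℂ)) A) (cfc (fun l => (h l : ℂ)) A) ≤ ε' := by
    rw [dist_eq_norm, ← cfc_sub (fun l => (g l : ℂ)) (fun l => (h l : ℂ)) A
      (Complex.continuous_ofReal.comp_continuousOn hg)
      (Complex.continuous_ofReal.comp_continuousOn hhc)]
    refine norm_cfc_le hε'pos.le ?_
    intro l hl
    have hb : |g l - h l| ≤ ε' := by
      rw [hh]
      simp only
      rcases le_or_gt (g l + ε') 0 with hc | hc
      · rw [min_eq_left hc]
        have he : g l - (g l + ε') = -ε' := by ring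
        rw [he, abs_neg, _root_.abs_of_nonneg hε'pos.le]
      · rw [min_eq_right hc.le, sub_zero, _root_.abs_of_nonpos (hgle l hl)]
        linarith
    calc ‖((g l : ℂ) - (h l : ℂ))‖ = ‖((g l - h l : ℝ) : ℂ)‖ := by push_cast; ring_nf
    _ = |g l - h l| := by rw [Complex.norm_real, Real.norm_eq_abs]
    _ ≤ ε' := hb
  calc dist (cfc (fun l => (g l : ℂ)) A) (cfc (fun l => (h l : ℂ)) A) ≤ ε' := hdist
  _ < ε := by rw [hε'def]; linarith

lemma aux_key_decomp (A : H →L[ℂ] H) (hA : IsStarNormal A) (z : ℂ) (c : ℂ) (γ : ℝ) (hγ : 0 < γ)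
    (hsep : ∀ s ∈ sigmaSet (essSpectrum A) z, γ ≤ (c * s).re) :
    ∃ C : H →L[ℂ] H, IsCompactOperator ⇑C ∧
      ∀ x : H, γ * ‖x‖ ^ 2 ≤ (c * ⟪x, (Tz A z) x⟫_ℂ).re - (⟪x, C x⟫_ℂ).re := by
  set t : ℂ → ℂ := fun l => ((starRingEnd ℂ) l - z) * (l - z) with ht
  have htc : ContinuousOn t (spectrum ℂ A) :=
    ((Complex.continuous_conj.sub continuous_const).mul
      (continuous_id.sub continuous_const)).continuousOn
  set f : ℂ → ℝ := fun l => (c * t l).re with hf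
  have hfc : ContinuousOn f (spectrum ℂ A) :=
    Complex.continuous_re.comp_continuousOn (continuousOn_const.mul htc)
  set g1 : ℂ → ℝ := fun l => max (f l) γ with hg1
  have hg1c : ContinuousOn g1 (spectrum ℂ A) :=
    (continuous_id.max continuous_const).comp_continuousOn hfc
  set g2 : ℂ → ℝ := fun l => f l - g1 l with hg2
  have hg2c : ContinuousOn g2 (spectrum ℂ A) := hfc.sub hg1c
  set C := cfc (fun l => (g2 l : ℂ)) A with hC
  have hCcomp : IsCompactOperator ⇑C := by
    refine aux_cfc_compact A hA g2 hg2c (fun l _ => ?_) (fun l hl => ?_)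
    · rw [hg2]
      simp only
      have := le_max_left (f l) γ
      rw [hg1]
      simp only
      linarith
    · have hs : (l - z) * ((starRingEnd ℂ) l - z) ∈ sigmaSet (essSpectrum A) z := ⟨l, hl, rfl⟩
      have hγle := hsep _ hs
      have hfl : γ ≤ f l := by
        rw [hf]
        simp only
        rw [ht]
        simp only
        rw [mul_comm ((starRingEnd ℂ) l - z) (l - z)]
        exact hγle
      rw [hg2, hg1]
      simp only
      rw [max_eq_left hfl]
      ring
  refine ⟨C, hCcomp, fun x => ?_⟩
  set D := cfc (fun l => (g1 l : ℂ)) A with hD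
  -- positivity of D - γ
  have hpos : 0 ≤ (⟪x, (cfc (fun l => ((g1 l - γ : ℝ) : ℂ)) A) x⟫_ℂ).re := by
    refine aux_cfc_re_nonneg A hA (fun l => g1 l - γ) (hg1c.sub continuousOn_const)
      (fun l _ => ?_) x
    simp only [hg1, sub_nonneg]
    exact le_max_right _ _
  have hsplit : cfc (fun l => ((g1 l - γ : ℝ) : ℂ)) A = D - (γ : ℂ) • 1 := by
    have hfun : (fun l : ℂ => ((g1 l - γ : ℝ) : ℂ)) = fun l => (g1 l : ℂ) - ((γ : ℝ) : ℂ) := by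
      funext l; push_cast; ring
    rw [hfun, cfc_sub (fun l => (g1 l : ℂ)) (fun _ => ((γ : ℝ) : ℂ)) A
      (Complex.continuous_ofReal.comp_continuousOn hg1c) continuousOn_const,
      cfc_const _ A, Algebra.algebraMap_eq_smul_one, hD]
  have hγx : (⟪x, ((γ : ℂ) • (1 : H →L[ℂ] H)) x⟫_ℂ).re = γ * ‖x‖ ^ 2 := by
    rw [smul_apply, ContinuousLinearMap.one_apply, inner_smul_right, Complex.mul_re]
    have hxre : (⟪x, x⟫_ℂ).re = ‖x‖ ^ 2 := by
      have h := norm_sq_eq_re_inner (𝕜 := ℂ) x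
      exact h.symm
    have hxim : (⟪x, x⟫_ℂ).im = 0 := by
      have h := @inner_self_im ℂ _ _ _ _ x
      exact h
    rw [hxre, hxim, Complex.ofReal_re, Complex.ofReal_im]
    ring
  have hDlow : γ * ‖x‖ ^ 2 ≤ (⟪x, D x⟫_ℂ).re := by
    rw [hsplit] at hpos
    have : ⟪x, (D - (γ : ℂ) • 1) x⟫_ℂ = ⟪x, D x⟫_ℂ - ⟪x, ((γ : ℂ) • (1 : H →L[ℂ] H)) x⟫_ℂ := by
      rw [sub_apply, inner_sub_right]
    rw [this] at hpos
    rw [Complex.sub_re, hγx] at hpos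
    linarith
  -- D + C = cfc f
  have hDC : D + C = cfc (fun l => (f l : ℂ)) A := by
    rw [hD, hC, ← cfc_add (a := A) (fun l => (g1 l : ℂ)) (fun l => (g2 l : ℂ))
      (Complex.continuous_ofReal.comp_continuousOn hg1c)
      (Complex.continuous_ofReal.comp_continuousOn hg2c)]
    apply cfc_congr
    intro l _
    show (g1 l : ℂ) + (g2 l : ℂ) = (f l : ℂ)
    rw [hg2]
    push_cast
    ring
  -- quadratic form of cfc f
  have hform : (⟪x, (cfc (fun l => (f l : ℂ)) A) x⟫_ℂ).re = (c * ⟪x, (Tz A z) x⟫_ℂ).re := by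
    have h2 : cfc (fun l => c * t l) A = c • Tz A z := by
      rw [cfc_const_mul c t A htc, aux_tz_cfc A hA z]
    have h3 : cfc (fun l => (starRingEnd ℂ) (c * t l)) A = star (c • Tz A z) := by
      have := cfc_star (fun l => c * t l) A
      rw [h2] at this
      exact this
    have h1 : cfc (fun l => (f l : ℂ)) A =
        (2⁻¹ : ℂ) • cfc (fun l => c * t l + (starRingEnd ℂ) (c * t l)) A := by
      rw [← cfc_const_mul (2⁻¹ : ℂ) (fun l => c * t l + (starRingEnd ℂ) (c * t l)) A
        ((continuousOn_const.mul htc).add (Complex.continuous_conj.comp_continuousOn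
          (continuousOn_const.mul htc)))]
      apply cfc_congr
      intro l _
      show (f l : ℂ) = 2⁻¹ * (c * t l + (starRingEnd ℂ) (c * t l))
      rw [Complex.add_conj, hf]
      simp only
      push_cast
      ring
    have h4 : cfc (fun l => c * t l + (starRingEnd ℂ) (c * t l)) A
        = c • Tz A z + star (c • Tz A z) := by
      have hstep := cfc_add (a := A) (fun l => c * t l) (fun l => (starRingEnd ℂ) (c * t l))
        (continuousOn_const.mul htc)
        (Complex.continuous_conj.comp_continuousOn (continuousOn_const.mul htc))
      rw [hstep, h2, h3]
    rw [h1, h4]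
    set E := c • Tz A z with hE
    have h5 : ⟪x, ((2⁻¹ : ℂ) • (E + star E)) x⟫_ℂ
        = 2⁻¹ * (⟪x, E x⟫_ℂ + ⟪x, (star E) x⟫_ℂ) := by
      rw [smul_apply, inner_smul_right, add_apply, inner_add_right]
    have h6 : ⟪x, (star E) x⟫_ℂ = (starRingEnd ℂ) ⟪x, E x⟫_ℂ := by
      rw [star_eq_adjoint, adjoint_inner_right, ← inner_conj_symm]
    have h7 : ⟪x, E x⟫_ℂ = c * ⟪x, (Tz A z) x⟫_ℂ := by
      rw [hE, smul_apply, inner_smul_right]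
    rw [h5, h6, h7]
    have h8 : (2⁻¹ * (c * ⟪x, (Tz A z) x⟫_ℂ + (starRingEnd ℂ) (c * ⟪x, (Tz A z) x⟫_ℂ))).re
        = (c * ⟪x, (Tz A z) x⟫_ℂ).re := by
      rw [Complex.add_conj]
      rw [show ((2⁻¹ : ℂ)) = ((2⁻¹ : ℝ) : ℂ) by norm_num]
      rw [← Complex.ofReal_mul, Complex.ofReal_re]
      ring
    rw [h8]
  -- combine
  have hsum : ⟪x, D x⟫_ℂ + ⟪x, C x⟫_ℂ = ⟪x, (cfc (fun l => (f l : ℂ)) A) x⟫_ℂ := by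
    rw [← hDC, add_apply, inner_add_right]
  have : (⟪x, D x⟫_ℂ).re = (c * ⟪x, (Tz A z) x⟫_ℂ).re - (⟪x, C x⟫_ℂ).re := by
    have := congrArg Complex.re hsum
    rw [Complex.add_re, hform] at this
    linarith
  linarith

lemma aux_projCLM_eq (L : Submodule ℂ H) [h : L.HasOrthogonalProjection] :
    projCLM L = L.orthogonalProjectionOnto := by
  unfold projCLM
  rw [dif_pos h]

lemma aux_galerkin (A : H →L[ℂ] H) (L : Submodule ℂ H) [FiniteDimensional ℂ ↥L]
    {w : ℂ} (hw : w ∈ spectrum ℂ (SL A L)) :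
    ∃ φ : H, φ ∈ L ∧ ‖φ‖ = 1 ∧ ∀ ψ ∈ L, ⟪(Tz A w) φ, ψ⟫_ℂ = 0 := by
  haveI : CompleteSpace ↥L := FiniteDimensional.complete ℂ ↥L
  obtain ⟨v, hv0, hSv⟩ := aux_eig_findim (SL A L) hw
  have happly : SL A L v = (compress (A + ContinuousLinearMap.adjoint A) L v.1
      - compress (ContinuousLinearMap.adjoint A * A) L v.2, v.1) := by
    show block2 _ _ _ _ v = _
    unfold block2
    rw [ContinuousLinearMap.prod_apply]
    congr 1
    · rw [add_apply, comp_apply, comp_apply, neg_apply]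
      rw [ContinuousLinearMap.coe_fst', ContinuousLinearMap.coe_snd']
      abel
    · rw [add_apply, comp_apply, comp_apply, ContinuousLinearMap.one_apply, zero_apply, add_zero,
        ContinuousLinearMap.coe_fst']
  have h2 : v.1 = w • v.2 := by
    have h := congrArg Prod.snd hSv
    rw [happly] at h
    simpa using h
  have h1 : compress (A + ContinuousLinearMap.adjoint A) L v.1
      - compress (ContinuousLinearMap.adjoint A * A) L v.2 = w • v.1 := by
    have h := congrArg Prod.fst hSv
    rw [happly] at h
    simpa using h
  have hp0 : v.2 ≠ 0 := by
    intro h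
    apply hv0
    have h1' : v.1 = 0 := by rw [h2, h, smul_zero]
    exact Prod.ext h1' h
  have hp0' : (v.2 : H) ≠ 0 := fun h => hp0 (Subtype.coe_injective h)
  -- the Galerkin identity
  have hker : projCLM L ((Tz A w) (v.2 : H)) = 0 := by
    have hproj2 : projCLM L ((v.2 : H)) = v.2 := by
      rw [aux_projCLM_eq]
      exact Submodule.orthogonalProjectionOnto_mem_subspace_eq_self v.2
    have hcomp : ∀ (B : H →L[ℂ] H) (x : ↥L), compress B L x = projCLM L (B (x : H)) := by
      intro B x; rfl
    rw [h2] at h1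
    rw [hcomp, hcomp] at h1
    have hcoe : ((w • v.2 : ↥L) : H) = w • (v.2 : H) := rfl
    rw [hcoe] at h1
    -- h1 : projCLM L ((A + A†) (w • ↑v.2)) - projCLM L ((A†*A) ↑v.2) = w • (w • v.2)
    have hTz : (Tz A w) ((v.2 : H)) = (w * w) • (v.2 : H)
        - (A + ContinuousLinearMap.adjoint A) (w • (v.2 : H))
        + (ContinuousLinearMap.adjoint A * A) ((v.2 : H)) := by
      simp only [Tz, ContinuousLinearMap.mul_apply, sub_apply, smul_apply, ContinuousLinearMap.one_apply, map_sub, map_smul, add_apply,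
        map_add, mul_smul]
      module
    rw [hTz]
    rw [map_add, map_sub, map_smul, hproj2]
    rw [smul_smul] at h1
    rw [← h1]
    abel
  refine ⟨((‖(v.2 : H)‖⁻¹ : ℝ) : ℂ) • (v.2 : H), ?_, ?_, ?_⟩
  · exact L.smul_mem _ v.2.2
  · rw [norm_smul, Complex.norm_real, Real.norm_eq_abs,
      _root_.abs_of_nonneg (by positivity), inv_mul_cancel₀ (norm_ne_zero_iff.mpr hp0')]
  · intro ψ hψ
    have hmain : ⟪(Tz A w) ((v.2 : H)), ψ⟫_ℂ = 0 := by
      have hlem := Submodule.inner_orthogonalProjectionOnto_eq_of_mem_right (K := L) ⟨ψ, hψ⟩ ((Tz A w) (v.2 : H))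
      have h0 : (L.orthogonalProjectionOnto) ((Tz A w) (v.2 : H)) = 0 := by
        rw [← aux_projCLM_eq]
        exact hker
      rw [h0] at hlem
      exact (hlem.symm).trans (inner_zero_left _)
    rw [map_smul, inner_smul_left, hmain, mul_zero]


lemma aux_mem_spectrum_of_ker (T : H →L[ℂ] H) (w : ℂ) (x : H) (hx : x ≠ 0)
    (hker : (T - w • 1) x = 0) : w ∈ spectrum ℂ T := by
  rw [spectrum.mem_iff]
  intro hunit
  obtain ⟨u, hu⟩ := hunit
  have happ : (algebraMap ℂ (H →L[ℂ] H) w - T) x = 0 := by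
    rw [Algebra.algebraMap_eq_smul_one]
    have h2 : (w • (1 : H →L[ℂ] H) - T) x = -((T - w • 1) x) := by
      simp [sub_apply, smul_apply, ContinuousLinearMap.one_apply]
    rw [h2, hker, neg_zero]
  apply hx
  have h3 : ((↑u⁻¹ : H →L[ℂ] H) * ↑u) x = x := by rw [u.inv_mul]; rfl
  rw [hu, ContinuousLinearMap.mul_apply, happ, map_zero] at h3
  exact h3.symm

/-- Corollary 4.5: any limit of second order spectra outside `Q(σ_ess(A))` belongs to
`σ_dis(A) ∪ σ_dis(A*)`. -/
theorem stmt13 (A : H →L[ℂ] H) (hA : IsStarNormal A)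
    (hinf : ¬ FiniteDimensional ℂ H)
    (L : ℕ → Submodule ℂ H) (hfd : ∀ n, FiniteDimensional ℂ ↥(L n))
    (hconv : ∀ ψ : H, Filter.Tendsto (fun n => projAmb (L n) ψ) Filter.atTop (nhds ψ))
    (z : ℂ) (hz : z ∉ QSet (essSpectrum A))
    (zseq : ℕ → ℂ) (hzseq : ∀ n, zseq n ∈ spectrum ℂ (SL A (L n)))
    (hlim : Filter.Tendsto zseq Filter.atTop (nhds z)) :
    z ∈ discSpectrum A ∪ discSpectrum (ContinuousLinearMap.adjoint A) := by
  classical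
  obtain ⟨c, γ, hγ, hsep⟩ := aux_sep hz
  obtain ⟨C, hCcomp, hC⟩ := aux_key_decomp A hA z c γ hγ hsep
  -- z and conj z avoid the essential spectrum
  have hzess : z ∉ essSpectrum A := by
    intro hzm
    have h0 : (z - z) * ((starRingEnd ℂ) z - z) ∈ sigmaSet (essSpectrum A) z := ⟨z, hzm, rfl⟩
    have hs := hsep _ h0
    simp only [sub_self, zero_mul, mul_zero, Complex.zero_re] at hs
    linarith
  have hzbess : (starRingEnd ℂ) z ∉ essSpectrum A := by
    intro hzm
    have h0 : ((starRingEnd ℂ) z - z) * ((starRingEnd ℂ) ((starRingEnd ℂ) z) - z)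
        ∈ sigmaSet (essSpectrum A) z := ⟨(starRingEnd ℂ) z, hzm, rfl⟩
    have hs := hsep _ h0
    rw [Complex.conj_conj, sub_self, mul_zero, mul_zero, Complex.zero_re] at hs
    linarith
  have hiso : ∀ v : ℂ, v ∉ essSpectrum A →
      ∃ ε > (0:ℝ), ∀ u ∈ spectrum ℂ A, dist u v < ε → u = v := by
    intro v hv
    by_contra hcon
    push_neg at hcon
    refine hv (aux_ess_of_acc A hA ?_)
    intro ε hε
    obtain ⟨u, h1, h2, h3⟩ := hcon ε hε
    exact ⟨u, h1, h3, h2⟩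
  -- Galerkin sequence
  have hgal : ∀ n, ∃ φ : H, φ ∈ L n ∧ ‖φ‖ = 1 ∧ ∀ ψ ∈ L n, ⟪(Tz A (zseq n)) φ, ψ⟫_ℂ = 0 := by
    intro n
    haveI := hfd n
    exact aux_galerkin A (L n) (hzseq n)
  choose φs hφmem hφnorm hφort using hgal
  -- operator norm convergence
  have hTzcont : Filter.Tendsto (fun n => ‖Tz A z - Tz A (zseq n)‖) Filter.atTop (nhds 0) := by
    have h1 : Filter.Tendsto (fun n => Tz A (zseq n)) Filter.atTop (nhds (Tz A z)) :=
      ((aux_tz_cont A).tendsto z).comp hlim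
    have h2 := (tendsto_const_nhds (x := Tz A z) (f := Filter.atTop (α := ℕ))).sub h1
    rw [sub_self] at h2
    simpa using h2.norm
  -- quadratic form tends to 0
  have hq0 : Filter.Tendsto (fun n => ⟪φs n, (Tz A z) (φs n)⟫_ℂ) Filter.atTop (nhds 0) := by
    have heq : ∀ n, ⟪φs n, (Tz A z) (φs n)⟫_ℂ
        = ⟪φs n, (Tz A z - Tz A (zseq n)) (φs n)⟫_ℂ := by
      intro n
      have h0 : ⟪(Tz A (zseq n)) (φs n), φs n⟫_ℂ = 0 := hφort n (φs n) (hφmem n)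
      have h0' : ⟪φs n, (Tz A (zseq n)) (φs n)⟫_ℂ = 0 := by
        rw [← inner_conj_symm, h0, map_zero]
      rw [sub_apply, inner_sub_right, h0', sub_zero]
    refine squeeze_zero_norm (fun n => ?_) hTzcont
    rw [heq n]
    calc ‖⟪φs n, (Tz A z - Tz A (zseq n)) (φs n)⟫_ℂ‖
        ≤ ‖φs n‖ * ‖(Tz A z - Tz A (zseq n)) (φs n)‖ := norm_inner_le_norm _ _
    _ ≤ ‖φs n‖ * (‖Tz A z - Tz A (zseq n)‖ * ‖φs n‖) :=
        mul_le_mul_of_nonneg_left (le_opNorm _ _) (norm_nonneg _)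
    _ = ‖Tz A z - Tz A (zseq n)‖ := by rw [hφnorm n]; ring
  -- eventual bound on the compact part
  have hCev : ∀ᶠ n in Filter.atTop, (⟪φs n, C (φs n)⟫_ℂ).re ≤ -γ/2 := by
    have h1 : ∀ n, (⟪φs n, C (φs n)⟫_ℂ).re ≤ (c * ⟪φs n, (Tz A z) (φs n)⟫_ℂ).re - γ := by
      intro n
      have h := hC (φs n)
      rw [hφnorm n] at h
      simp only [one_pow, mul_one] at h
      linarith
    have h2 : Filter.Tendsto (fun n => (c * ⟪φs n, (Tz A z) (φs n)⟫_ℂ).re)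
        Filter.atTop (nhds 0) := by
      have h3 : Filter.Tendsto (fun n => c * ⟪φs n, (Tz A z) (φs n)⟫_ℂ)
          Filter.atTop (nhds 0) := by
        simpa using hq0.const_mul c
      have h4 := (Complex.continuous_re.tendsto 0).comp h3
      exact h4
    have h5 : ∀ᶠ n in Filter.atTop, (c * ⟪φs n, (Tz A z) (φs n)⟫_ℂ).re < γ/2 :=
      h2.eventually_lt_const (by linarith)
    filter_upwards [h5] with n hn
    have := h1 n
    linarith
  -- weak limit along an ultrafilter
  set U : Ultrafilter ℕ := Ultrafilter.of Filter.atTop with hU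
  have hUle : (U : Filter ℕ) ≤ Filter.atTop := Ultrafilter.of_le _
  obtain ⟨φ, hφle, hφw⟩ := aux_weak_limit U φs (fun n => le_of_eq (hφnorm n))
  -- T_z φ = 0
  have hTzφ : (Tz A z) φ = 0 := by
    have hkey : ∀ ψ : H, ⟪(Tz A z) φ, ψ⟫_ℂ = 0 := by
      intro ψ
      rw [← adjoint_inner_right]
      have h1 : Filter.Tendsto (fun n => ⟪φs n, (ContinuousLinearMap.adjoint (Tz A z)) ψ⟫_ℂ)
          U (nhds ⟪φ, (ContinuousLinearMap.adjoint (Tz A z)) ψ⟫_ℂ) := hφw _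
      have h2 : Filter.Tendsto (fun n => ⟪φs n, (ContinuousLinearMap.adjoint (Tz A z)) ψ⟫_ℂ)
          Filter.atTop (nhds 0) := by
        have heq : ∀ n, ⟪φs n, (ContinuousLinearMap.adjoint (Tz A z)) ψ⟫_ℂ
            = ⟪(Tz A z) (φs n), ψ - projAmb (L n) ψ⟫_ℂ
              + ⟪((Tz A z - Tz A (zseq n))) (φs n), projAmb (L n) ψ⟫_ℂ := by
          intro n
          have hPn : projAmb (L n) ψ ∈ L n := (projCLM (L n) ψ).2
          have hzero : ⟪(Tz A (zseq n)) (φs n), projAmb (L n) ψ⟫_ℂ = 0 :=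
            hφort n _ hPn
          rw [adjoint_inner_right]
          rw [inner_sub_right, sub_apply, inner_sub_left]
          rw [hzero]
          ring
        have hgten : Filter.Tendsto (fun n => ‖Tz A z‖ * ‖ψ - projAmb (L n) ψ‖
            + ‖Tz A z - Tz A (zseq n)‖ * ‖projAmb (L n) ψ‖) Filter.atTop (nhds 0) := by
          have ha : Filter.Tendsto (fun n => ‖ψ - projAmb (L n) ψ‖) Filter.atTop (nhds 0) := by
            have := (tendsto_const_nhds (x := ψ) (f := Filter.atTop (α := ℕ))).sub (hconv ψ)
            rw [sub_self] at this
            simpa using this.norm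
          have hb : Filter.Tendsto (fun n => ‖projAmb (L n) ψ‖) Filter.atTop (nhds ‖ψ‖) :=
            (hconv ψ).norm
          have hc' := (ha.const_mul ‖Tz A z‖).add (hTzcont.mul hb)
          simpa using hc'
        refine squeeze_zero_norm (fun n => ?_) hgten
        rw [heq n]
        calc ‖⟪(Tz A z) (φs n), ψ - projAmb (L n) ψ⟫_ℂ
            + ⟪((Tz A z - Tz A (zseq n))) (φs n), projAmb (L n) ψ⟫_ℂ‖
            ≤ ‖⟪(Tz A z) (φs n), ψ - projAmb (L n) ψ⟫_ℂ‖
            + ‖⟪((Tz A z - Tz A (zseq n))) (φs n), projAmb (L n) ψ⟫_ℂ‖ := norm_add_le _ _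
        _ ≤ ‖(Tz A z) (φs n)‖ * ‖ψ - projAmb (L n) ψ‖
            + ‖((Tz A z - Tz A (zseq n))) (φs n)‖ * ‖projAmb (L n) ψ‖ :=
            add_le_add (norm_inner_le_norm _ _) (norm_inner_le_norm _ _)
        _ ≤ ‖Tz A z‖ * ‖ψ - projAmb (L n) ψ‖
            + ‖Tz A z - Tz A (zseq n)‖ * ‖projAmb (L n) ψ‖ := by
            refine add_le_add (mul_le_mul_of_nonneg_right ?_ (norm_nonneg _))
              (mul_le_mul_of_nonneg_right ?_ (norm_nonneg _))
            · calc ‖(Tz A z) (φs n)‖ ≤ ‖Tz A z‖ * ‖φs n‖ := le_opNorm _ _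
              _ = ‖Tz A z‖ := by rw [hφnorm n, mul_one]
            · calc ‖((Tz A z - Tz A (zseq n))) (φs n)‖
                  ≤ ‖Tz A z - Tz A (zseq n)‖ * ‖φs n‖ := le_opNorm _ _
              _ = ‖Tz A z - Tz A (zseq n)‖ := by rw [hφnorm n, mul_one]
      have h3 := tendsto_nhds_unique (h2.mono_left hUle) h1
      exact h3.symm
    have h4 := hkey ((Tz A z) φ)
    rwa [inner_self_eq_zero] at h4
  -- φ ≠ 0
  have hφ0 : φ ≠ 0 := by
    intro h0
    have hwnull : ∀ y : H, Filter.Tendsto (fun n => ⟪φs n, y⟫_ℂ) U (nhds 0) := by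
      intro y
      have := hφw y
      rwa [h0, inner_zero_left] at this
    set S := closure (⇑C '' Metric.closedBall 0 1) with hS
    have hScomp : IsCompact S :=
      IsCompactOperator.isCompact_closure_image_closedBall (f := (C : H →ₗ[ℂ] H)) hCcomp 1
    have hmemS : ∀ n, C (φs n) ∈ S := by
      intro n
      apply subset_closure
      exact ⟨φs n, by rw [Metric.mem_closedBall, dist_zero_right, hφnorm n], rfl⟩
    have hUm : ↑(Ultrafilter.map (fun n => C (φs n)) U) ≤ Filter.principal S := by
      rw [Filter.le_principal_iff, Ultrafilter.coe_map, Filter.mem_map]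
      exact Filter.univ_mem' hmemS
    obtain ⟨v, hvS, hvconv⟩ := hScomp.ultrafilter_le_nhds _ hUm
    have hvten : Filter.Tendsto (fun n => C (φs n)) U (nhds v) := hvconv
    have hip : Filter.Tendsto (fun n => ⟪φs n, C (φs n)⟫_ℂ) U (nhds 0) := by
      have hsplit : ∀ n, ⟪φs n, C (φs n)⟫_ℂ = ⟪φs n, C (φs n) - v⟫_ℂ + ⟪φs n, v⟫_ℂ := by
        intro n
        rw [inner_sub_right]
        ring
      have hA1 : Filter.Tendsto (fun n => ⟪φs n, C (φs n) - v⟫_ℂ) U (nhds 0) := by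
        have hgt : Filter.Tendsto (fun n => ‖C (φs n) - v‖) U (nhds 0) := by
          have := (hvten.sub (tendsto_const_nhds (x := v))).norm
          rw [sub_self] at this
          simpa using this
        refine squeeze_zero_norm (fun n => ?_) hgt
        exact (norm_inner_le_norm _ _).trans (by rw [hφnorm n, one_mul])
      have hA2 := hwnull v
      have := hA1.add hA2
      rw [add_zero] at this
      exact Filter.Tendsto.congr (fun n => (hsplit n).symm) this
    have hre : Filter.Tendsto (fun n => (⟪φs n, C (φs n)⟫_ℂ).re) U (nhds 0) := by
      have := (Complex.continuous_re.tendsto 0).comp hip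
      exact this
    have hev : ∀ᶠ n in (U : Filter ℕ), (⟪φs n, C (φs n)⟫_ℂ).re ≤ -γ/2 :=
      hCev.filter_mono hUle
    have := le_of_tendsto hre hev
    linarith
  -- conclude
  have hTzφ' : ((ContinuousLinearMap.adjoint A - z • 1) * (A - z • 1)) φ = 0 := hTzφ
  by_cases hAz : (A - z • 1) φ = 0
  · left
    refine ⟨aux_mem_spectrum_of_ker A z φ hφ0 hAz, hiso z hzess, ?_, aux_ker_findim A hzess⟩
    rw [Submodule.ne_bot_iff]
    exact ⟨φ, hAz, hφ0⟩
  · right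
    set ψ0 := (A - z • 1) φ with hψ0
    have hψker : (ContinuousLinearMap.adjoint A - z • 1) ψ0 = 0 := by
      have := hTzφ'
      rwa [ContinuousLinearMap.mul_apply] at this
    refine ⟨aux_mem_spectrum_of_ker (ContinuousLinearMap.adjoint A) z ψ0 hAz hψker, ?_, ?_, ?_⟩
    · obtain ⟨ε, hε, hisoz⟩ := hiso ((starRingEnd ℂ) z) hzbess
      refine ⟨ε, hε, ?_⟩
      intro u hu hud
      have hu' : (starRingEnd ℂ) u ∈ spectrum ℂ A := by
        rw [spectrum.mem_iff] at hu ⊢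
        intro hunit
        apply hu
        have heq : star (algebraMap ℂ (H →L[ℂ] H) ((starRingEnd ℂ) u) - A)
            = algebraMap ℂ (H →L[ℂ] H) u - ContinuousLinearMap.adjoint A := by
          rw [star_sub]
          congr 1
          rw [Algebra.algebraMap_eq_smul_one, Algebra.algebraMap_eq_smul_one, star_smul,
            star_one, Complex.star_def, Complex.conj_conj]
        rw [← heq]
        exact hunit.star
      have hd : dist ((starRingEnd ℂ) u) ((starRingEnd ℂ) z) < ε := by
        rw [dist_eq_norm, ← map_sub, RCLike.norm_conj, ← dist_eq_norm]
        exact hud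
      have := hisoz _ hu' hd
      exact (starRingEnd ℂ).injective this
    · rw [Submodule.ne_bot_iff]
      refine ⟨ψ0, hψker, hAz⟩
    · have hkereq : LinearMap.ker ((ContinuousLinearMap.adjoint A - z • 1 : H →L[ℂ] H) : H →ₗ[ℂ] H)
          = LinearMap.ker ((A - (starRingEnd ℂ) z • 1 : H →L[ℂ] H) : H →ₗ[ℂ] H) := by
        ext x
        rw [LinearMap.mem_ker, LinearMap.mem_ker]
        have hnorm := aux_norm_adj_apply A hA ((starRingEnd ℂ) z) x
        rw [Complex.conj_conj] at hnorm
        constructor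
        · intro hx
          have : ‖(A - (starRingEnd ℂ) z • 1) x‖ = 0 := by rw [← hnorm, show (ContinuousLinearMap.adjoint A - z • 1) x = 0 from hx, norm_zero]
          exact norm_eq_zero.mp this
        · intro hx
          have : ‖(ContinuousLinearMap.adjoint A - z • 1) x‖ = 0 := by
            rw [hnorm, show (A - (starRingEnd ℂ) z • 1) x = 0 from hx, norm_zero]
          exact norm_eq_zero.mp this
      rw [hkereq]
      exact aux_ker_findim A hzbess

end
end
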